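/- arXiv:2007.01985 — 5 statements merged into one kernel-verified Lean document; each statement's English description precedes it below -/
import Mathlib

section
/- Let X be a proper geodesic space and H ≤ G ≤ Iso(X) closed subgroups. If diam(X/G) and the index [G:H] are both finite, then diam(X/H) ≤ 3·[G:H]·diam(X/G). -/
open Metric

def IsGeodesicSpace (Y : Type*) [MetricSpace Y] : Prop :=
  ∀ x y : Y, ∃ γ : ℝ → Y, γ 0 = x ∧ γ (dist x y) = y ∧
    ∀ s ∈ Set.Icc 0 (dist x y), ∀ t ∈ Set.Icc 0 (dist x y), dist (γ s) (γ t) = |s - t|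

noncomputable def isoTopology (Y : Type*) [MetricSpace Y] : TopologicalSpace (Y ≃ᵢ Y) :=
  TopologicalSpace.induced (fun g : Y ≃ᵢ Y => (g : Y → Y)) inferInstance

/-- The orbit of a point under a closed subgroup of isometries of a proper space is closed. -/
lemma orbit_isClosed (X : Type*) [MetricSpace X] [ProperSpace X]
    (H : Subgroup (X ≃ᵢ X))
    (hHclosed : @IsClosed _ (isoTopology X) (H : Set (X ≃ᵢ X))) (x : X) :
    IsClosed (Set.range fun h : H => (h : X ≃ᵢ X) x) := by
  apply IsSeqClosed.isClosed
  intro u z hu huz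
  choose h hh using hu
  -- a uniform bound on `dist (h n x) z`
  obtain ⟨C, hC0, hC⟩ : ∃ C, 0 ≤ C ∧ ∀ n, dist ((h n : X ≃ᵢ X) x) z ≤ C := by
    have : ∀ n, dist ((h n : X ≃ᵢ X) x) z = dist (u n) z := fun n =>
      congrArg (fun w => dist w z) (hh n)
    have hb : BddAbove (Set.range fun n => dist (u n) z) := by
      have : Filter.Tendsto (fun n => dist (u n) z) Filter.atTop (nhds 0) :=
        tendsto_iff_dist_tendsto_zero.mp huz
      exact this.bddAbove_range
    obtain ⟨C, hC⟩ := hb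
    exact ⟨C, le_trans dist_nonneg (hC ⟨0, rfl⟩), fun n => by
      rw [this n]; exact hC ⟨n, rfl⟩⟩
  set s : ℕ → (X → X) × (X → X) :=
    fun n => (⇑((h n : X ≃ᵢ X)), ⇑(((h n : X ≃ᵢ X))⁻¹)) with hs
  set K : Set ((X → X) × (X → X)) :=
    (Set.univ.pi fun w => closedBall z (dist w x + C)) ×ˢ
      (Set.univ.pi fun w => closedBall x (dist w z + C)) with hK
  have hKc : IsCompact K :=
    (isCompact_univ_pi fun w => isCompact_closedBall _ _).prod
      (isCompact_univ_pi fun w => isCompact_closedBall _ _)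
  have hmem : ∀ n, s n ∈ K := by
    intro n
    constructor
    · intro w _
      have : dist ((h n : X ≃ᵢ X) w) z ≤ dist w x + C := by
        calc dist ((h n : X ≃ᵢ X) w) z
            ≤ dist ((h n : X ≃ᵢ X) w) ((h n : X ≃ᵢ X) x) + dist ((h n : X ≃ᵢ X) x) z :=
              dist_triangle _ _ _
          _ ≤ dist w x + C := by rw [IsometryEquiv.dist_eq]; exact add_le_add le_rfl (hC n)
      simpa [mem_closedBall] using this
    · intro w _
      have : dist (((h n : X ≃ᵢ X))⁻¹ w) x ≤ dist w z + C := by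
        have e1 : dist (((h n : X ≃ᵢ X))⁻¹ w) x = dist w ((h n : X ≃ᵢ X) x) := by
          rw [← IsometryEquiv.dist_eq (h n : X ≃ᵢ X)]
          simp
        rw [e1]
        calc dist w ((h n : X ≃ᵢ X) x) ≤ dist w z + dist z ((h n : X ≃ᵢ X) x) :=
              dist_triangle _ _ _
          _ ≤ dist w z + C := by rw [dist_comm z]; exact add_le_add le_rfl (hC n)
      simpa [mem_closedBall] using this
  have hle : Filter.map s Filter.atTop ≤ Filter.principal K :=
    Filter.le_principal_iff.mpr (Filter.eventually_map.mpr (Filter.Eventually.of_forall hmem))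
  obtain ⟨fg, _hfgK, hcl⟩ := hKc.exists_clusterPt hle
  obtain ⟨f, g⟩ := fg
  set L : Filter ((X → X) × (X → X)) := nhds (f, g) ⊓ Filter.map s Filter.atTop with hLdef
  haveI hLne : L.NeBot := hcl
  have h1 : ∀ a : X, Filter.Tendsto (fun p : (X → X) × (X → X) => p.1 a) L (nhds (f a)) :=
    fun a => (((continuous_apply a).comp continuous_fst).tendsto (f, g)).mono_left inf_le_left
  have h2 : ∀ a : X, Filter.Tendsto (fun p : (X → X) × (X → X) => p.2 a) L (nhds (g a)) :=
    fun a => (((continuous_apply a).comp continuous_snd).tendsto (f, g)).mono_left inf_le_left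
  have hrange : ∀ᶠ p in L, ∃ n, p = s n := by
    have : ∀ᶠ p in Filter.map s Filter.atTop, ∃ n, p = s n :=
      Filter.eventually_map.mpr (Filter.Eventually.of_forall fun n => ⟨n, rfl⟩)
    exact this.filter_mono inf_le_right
  -- f is an isometry
  have hfiso : ∀ a b : X, dist (f a) (f b) = dist a b := by
    intro a b
    have t1 : Filter.Tendsto (fun p : (X → X) × (X → X) => dist (p.1 a) (p.1 b)) L
        (nhds (dist (f a) (f b))) := (h1 a).dist (h1 b)
    have t2 : Filter.Tendsto (fun p : (X → X) × (X → X) => dist (p.1 a) (p.1 b)) L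
        (nhds (dist a b)) := by
      apply Filter.Tendsto.congr' _ (tendsto_const_nhds (x := dist a b))
      filter_upwards [hrange] with p hp
      obtain ⟨n, rfl⟩ := hp
      exact (IsometryEquiv.dist_eq _ a b).symm
    exact tendsto_nhds_unique t1 t2
  -- g ∘ f = id
  have hgf : ∀ a : X, g (f a) = a := by
    intro a
    have hbound : ∀ᶠ p in L, dist (p.2 (p.1 a)) (g (f a)) ≤
        dist (p.1 a) (f a) + dist (p.2 (f a)) (g (f a)) := by
      filter_upwards [hrange] with p hp
      obtain ⟨n, rfl⟩ := hp
      calc dist ((s n).2 ((s n).1 a)) (g (f a))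
          ≤ dist ((s n).2 ((s n).1 a)) ((s n).2 (f a)) + dist ((s n).2 (f a)) (g (f a)) :=
            dist_triangle _ _ _
        _ = dist ((s n).1 a) (f a) + dist ((s n).2 (f a)) (g (f a)) := by
            rw [hs]; rw [IsometryEquiv.dist_eq]
    have T1 : Filter.Tendsto (fun p : (X → X) × (X → X) => dist (p.1 a) (f a)) L
        (nhds 0) := tendsto_iff_dist_tendsto_zero.mp (h1 a)
    have T2 : Filter.Tendsto (fun p : (X → X) × (X → X) => dist (p.2 (f a)) (g (f a))) L
        (nhds 0) := tendsto_iff_dist_tendsto_zero.mp (h2 (f a))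
    have t0 : Filter.Tendsto (fun p : (X → X) × (X → X) => dist (p.2 (p.1 a)) (g (f a))) L
        (nhds 0) :=
      squeeze_zero' (Filter.Eventually.of_forall fun _ => dist_nonneg) hbound
        (by simpa using T1.add T2)
    have t1 : Filter.Tendsto (fun p : (X → X) × (X → X) => p.2 (p.1 a)) L (nhds (g (f a))) :=
      tendsto_iff_dist_tendsto_zero.mpr t0
    have t2 : Filter.Tendsto (fun p : (X → X) × (X → X) => p.2 (p.1 a)) L (nhds a) := by
      apply Filter.Tendsto.congr' _ (tendsto_const_nhds (x := a))
      filter_upwards [hrange] with p hp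
      obtain ⟨n, rfl⟩ := hp
      simp [hs]
    exact tendsto_nhds_unique t1 t2
  -- f ∘ g = id
  have hfg : ∀ a : X, f (g a) = a := by
    intro a
    have hbound : ∀ᶠ p in L, dist (p.1 (p.2 a)) (f (g a)) ≤
        dist (p.2 a) (g a) + dist (p.1 (g a)) (f (g a)) := by
      filter_upwards [hrange] with p hp
      obtain ⟨n, rfl⟩ := hp
      calc dist ((s n).1 ((s n).2 a)) (f (g a))
          ≤ dist ((s n).1 ((s n).2 a)) ((s n).1 (g a)) + dist ((s n).1 (g a)) (f (g a)) :=
            dist_triangle _ _ _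
        _ = dist ((s n).2 a) (g a) + dist ((s n).1 (g a)) (f (g a)) := by
            rw [hs]; rw [IsometryEquiv.dist_eq]
    have T1 : Filter.Tendsto (fun p : (X → X) × (X → X) => dist (p.2 a) (g a)) L
        (nhds 0) := tendsto_iff_dist_tendsto_zero.mp (h2 a)
    have T2 : Filter.Tendsto (fun p : (X → X) × (X → X) => dist (p.1 (g a)) (f (g a))) L
        (nhds 0) := tendsto_iff_dist_tendsto_zero.mp (h1 (g a))
    have t0 : Filter.Tendsto (fun p : (X → X) × (X → X) => dist (p.1 (p.2 a)) (f (g a))) L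
        (nhds 0) :=
      squeeze_zero' (Filter.Eventually.of_forall fun _ => dist_nonneg) hbound
        (by simpa using T1.add T2)
    have t1 : Filter.Tendsto (fun p : (X → X) × (X → X) => p.1 (p.2 a)) L (nhds (f (g a))) :=
      tendsto_iff_dist_tendsto_zero.mpr t0
    have t2 : Filter.Tendsto (fun p : (X → X) × (X → X) => p.1 (p.2 a)) L (nhds a) := by
      apply Filter.Tendsto.congr' _ (tendsto_const_nhds (x := a))
      filter_upwards [hrange] with p hp
      obtain ⟨n, rfl⟩ := hp
      simp [hs]
    exact tendsto_nhds_unique t1 t2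
  -- f x = z
  have hfx : f x = z := by
    have t1 : Filter.Tendsto (fun p : (X → X) × (X → X) => p.1 x) L (nhds z) := by
      have : Filter.Tendsto (fun p : (X → X) × (X → X) => p.1 x) (Filter.map s Filter.atTop)
          (nhds z) := by
        rw [Filter.tendsto_map'_iff]
        exact huz.congr fun n => (hh n).symm
      exact this.mono_left inf_le_right
    exact tendsto_nhds_unique (h1 x) t1
  -- assemble the isometry equivalence
  set e : X ≃ᵢ X := ⟨⟨f, g, hgf, hfg⟩, Isometry.of_dist_eq hfiso⟩ with he
  have heH : e ∈ H := by
    rw [isoTopology] at hHclosed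
    obtain ⟨C', hC'cl, hC'eq⟩ := isClosed_induced_iff.mp hHclosed
    have hfC : f ∈ C' := by
      apply hC'cl.closure_subset
      apply mem_closure_of_tendsto (f := fun p : (X → X) × (X → X) => p.1) (b := L)
      · exact (continuous_fst.tendsto (f, g)).mono_left inf_le_left
      · filter_upwards [hrange] with p hp
        obtain ⟨n, rfl⟩ := hp
        have hmemn : ((h n : X ≃ᵢ X)) ∈ (fun g : X ≃ᵢ X => (g : X → X)) ⁻¹' C' := by
          rw [hC'eq]; exact (h n).2
        exact hmemn
    have he' : e ∈ (fun g : X ≃ᵢ X => (g : X → X)) ⁻¹' C' := hfC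
    rw [hC'eq] at he'
    exact he'
  exact ⟨⟨e, heH⟩, hfx⟩

/-- The main quantitative chain lemma. -/
lemma chain_lemma (X : Type*) [MetricSpace X] (hgeo : IsGeodesicSpace X)
    (G H : Subgroup (X ≃ᵢ X)) (n : ℕ) (hn : 0 < n)
    (hfin : Finite (G ⧸ Subgroup.subgroupOf H G))
    (hcard : Nat.card (G ⧸ Subgroup.subgroupOf H G) = n)
    (D : ℝ) (hD : 0 < D) (hdiam : ∀ x y : X, ∃ g ∈ G, dist (g x) y ≤ D) :
    ∀ m : ℕ, ∀ x y : X, dist x y ≤ 3 * n * D + m * D →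
      ∃ h ∈ H, dist (h x) y ≤ 3 * n * D := by
  intro m
  induction m with
  | zero =>
    intro x y hxy
    exact ⟨1, one_mem H, by simpa using hxy⟩
  | succ m ih =>
    intro x y hxy
    by_cases hle : dist x y ≤ 3 * n * D
    · exact ⟨1, one_mem H, by simpa using hle⟩
    push_neg at hle
    set Ldist := dist x y with hLdist
    have hL0 : 0 < Ldist := lt_of_le_of_lt (by positivity) hle
    obtain ⟨γ, hγ0, hγL, hγd⟩ := hgeo x y
    set t : Fin (n + 1) → ℝ := fun k => k * Ldist / n with ht
    have ht_mem : ∀ k : Fin (n + 1), t k ∈ Set.Icc 0 Ldist := by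
      intro k
      constructor
      · positivity
      · rw [ht]
        rw [div_le_iff₀ (by exact_mod_cast hn)]
        have : (k : ℝ) ≤ n := by exact_mod_cast Fin.is_le k
        nlinarith
    choose g hgG hgd using fun k => hdiam x (γ (t k))
    haveI := hfin
    haveI : Fintype (G ⧸ Subgroup.subgroupOf H G) := Fintype.ofFinite _
    obtain ⟨i, j, hij, hqe⟩ :=
      Fintype.exists_ne_map_eq_of_card_lt
        (fun k : Fin (n + 1) =>
          (QuotientGroup.mk ((⟨g k, hgG k⟩ : G)⁻¹) : G ⧸ Subgroup.subgroupOf H G))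
        (by rw [Fintype.card_fin, ← Nat.card_eq_fintype_card, hcard]; omega)
    have aux : ∀ i j : Fin (n + 1), i < j →
        (QuotientGroup.mk ((⟨g i, hgG i⟩ : G)⁻¹) : G ⧸ Subgroup.subgroupOf H G) =
          QuotientGroup.mk ((⟨g j, hgG j⟩ : G)⁻¹) →
        ∃ h ∈ H, dist (h x) y ≤ 3 * n * D := by
      intro i j hij hq
      rw [QuotientGroup.eq] at hq
      rw [Subgroup.mem_subgroupOf] at hq
      have hmemH : g j * (g i)⁻¹ ∈ H := by
        have h0 : g i * (g j)⁻¹ ∈ H := by simpa using hq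
        have := H.inv_mem h0
        simpa [mul_inv_rev] using this
      set h₁ : X ≃ᵢ X := g j * (g i)⁻¹ with hh₁
      have hd2 : dist (h₁ (γ (t i))) (γ (t j)) ≤ 2 * D := by
        have e0 : (g j) x = h₁ ((g i) x) := by
          simp [hh₁, IsometryEquiv.mul_apply]
        have e1 : dist (h₁ (γ (t i))) ((g j) x) = dist ((g i) x) (γ (t i)) := by
          rw [e0, IsometryEquiv.dist_eq, dist_comm]
        calc dist (h₁ (γ (t i))) (γ (t j))
            ≤ dist (h₁ (γ (t i))) ((g j) x) + dist ((g j) x) (γ (t j)) := dist_triangle _ _ _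
          _ ≤ D + D := add_le_add (by rw [e1]; exact hgd i) (hgd j)
          _ = 2 * D := by ring
      set y' : X := h₁⁻¹ y with hy'
      have hdist_inv : ∀ a b : X, dist (h₁⁻¹ a) (h₁⁻¹ b) = dist a b :=
        fun a b => IsometryEquiv.dist_eq _ a b
      have hx_ti : dist x (γ (t i)) = t i := by
        have := hγd 0 ⟨le_refl 0, hL0.le⟩ (t i) (ht_mem i)
        rw [hγ0] at this
        rw [this, abs_of_nonpos (by linarith [(ht_mem i).1])]
        ring
      have htj_y : dist (γ (t j)) y = Ldist - t j := by
        have := hγd (t j) (ht_mem j) Ldist ⟨hL0.le, le_refl _⟩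
        rw [hγL] at this
        rw [this, abs_of_nonpos (by linarith [(ht_mem j).2])]
        ring
      have hmid : dist (γ (t i)) (h₁⁻¹ (γ (t j))) ≤ 2 * D := by
        have : dist (γ (t i)) (h₁⁻¹ (γ (t j))) = dist (h₁ (γ (t i))) (γ (t j)) := by
          rw [← hdist_inv (h₁ (γ (t i))) (γ (t j))]
          simp
        rw [this]; exact hd2
      have hlast : dist (h₁⁻¹ (γ (t j))) y' = Ldist - t j := by
        rw [hy', hdist_inv]; exact htj_y
      have htij : t j - t i ≥ Ldist / n := by
        have h1' : (i : ℝ) + 1 ≤ (j : ℝ) := by exact_mod_cast hij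
        have hn' : (0 : ℝ) < n := by exact_mod_cast hn
        have e2 : t j - t i = ((j : ℝ) - i) * Ldist / n := by rw [ht]; ring
        rw [ge_iff_le, e2, div_le_div_iff₀ hn' hn']
        have h3 : Ldist * n ≤ ((j : ℝ) - i) * (Ldist * n) :=
          le_mul_of_one_le_left (by positivity) (by linarith)
        nlinarith [h3]
      have hLn : Ldist / n > 3 * D := by
        have hn' : (0 : ℝ) < n := by exact_mod_cast hn
        rw [gt_iff_lt, lt_div_iff₀ hn']
        nlinarith
      have hxy' : dist x y' ≤ 3 * n * D + m * D := by
        have : dist x y' ≤ dist x (γ (t i)) + dist (γ (t i)) (h₁⁻¹ (γ (t j))) +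
            dist (h₁⁻¹ (γ (t j))) y' := dist_triangle4 _ _ _ _
        rw [hx_ti, hlast] at this
        have hb : dist x y' ≤ t i + 2 * D + (Ldist - t j) := by linarith [hmid]
        have : dist x y' ≤ Ldist - Ldist / n + 2 * D := by linarith
        have hxyle : Ldist ≤ 3 * n * D + (m + 1) * D := by
          calc Ldist ≤ 3 * n * D + (↑(m + 1)) * D := hxy
            _ = 3 * n * D + (m + 1) * D := by push_cast; ring
        linarith
      obtain ⟨h₂, hh₂H, hh₂d⟩ := ih x y' hxy'
      refine ⟨h₁ * h₂, H.mul_mem hmemH hh₂H, ?_⟩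
      have : dist ((h₁ * h₂) x) y = dist (h₂ x) y' := by
        rw [hy', ← hdist_inv ((h₁ * h₂) x) y]
        simp [IsometryEquiv.mul_apply]
      rw [this]; exact hh₂d
    rcases hij.lt_or_gt with h' | h'
    · exact aux i j h' hqe
    · exact aux j i h' hqe.symm

/-- If `diam(X/G) ≤ D` and `[G:H] < ∞`, then `diam(X/H) ≤ 3 [G:H] diam(X/G)`. -/
theorem diameter_subgroup
    (X : Type*) [MetricSpace X] [ProperSpace X] (hgeo : IsGeodesicSpace X)
    (G H : Subgroup (X ≃ᵢ X)) (hHG : H ≤ G)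
    (hGclosed : @IsClosed _ (isoTopology X) (G : Set (X ≃ᵢ X)))
    (hHclosed : @IsClosed _ (isoTopology X) (H : Set (X ≃ᵢ X)))
    (D : ℝ) (hD : 0 ≤ D)
    (hdiam : ∀ x y : X, ∃ g ∈ G, dist (g x) y ≤ D)
    (hindex : H.relIndex G ≠ 0) :
    ∀ x y : X, ∃ h ∈ H, dist (h x) y ≤ 3 * (H.relIndex G : ℝ) * D := by
  intro x y
  set n : ℕ := H.relIndex G with hn_def
  have hn : 0 < n := Nat.pos_of_ne_zero hindex
  have hcard : Nat.card (G ⧸ Subgroup.subgroupOf H G) = n := rfl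
  have hfin : Finite (G ⧸ Subgroup.subgroupOf H G) :=
    Nat.finite_of_card_ne_zero (by rw [hcard]; exact hindex)
  clear_value n
  set S : Set X := Set.range fun h : H => (h : X ≃ᵢ X) x with hS
  have hSne : S.Nonempty := ⟨x, ⟨1, by simp⟩⟩
  have hScl : IsClosed S := orbit_isClosed X H hHclosed x
  have hkey : ∀ ε : ℝ, 0 < ε → infDist y S ≤ 3 * n * D + ε := by
    intro ε hε
    have h3n : (0 : ℝ) < 3 * n := by positivity
    set D' : ℝ := D + ε / (3 * n) with hD'def
    clear_value D'
    have hd3 : 0 < ε / (3 * n) := div_pos hε h3n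
    have hD' : 0 < D' := by rw [hD'def]; linarith
    have hdiam' : ∀ a b : X, ∃ g ∈ G, dist (g a) b ≤ D' := by
      intro a b
      obtain ⟨g, hg, hd⟩ := hdiam a b
      exact ⟨g, hg, hd.trans (by rw [hD'def]; linarith)⟩
    obtain ⟨m, hm⟩ := exists_nat_ge (dist x y / D')
    have hxy : dist x y ≤ 3 * n * D' + m * D' := by
      have h1 : dist x y ≤ m * D' := by
        rw [div_le_iff₀ hD'] at hm
        linarith
      have h2 : (0 : ℝ) ≤ 3 * n * D' := by positivity
      linarith
    obtain ⟨h, hhH, hhd⟩ := chain_lemma X hgeo G H n hn hfin hcard D' hD' hdiam' m x y hxy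
    have hmem : h x ∈ S := ⟨⟨h, hhH⟩, rfl⟩
    calc infDist y S ≤ dist y (h x) := infDist_le_dist_of_mem hmem
      _ = dist (h x) y := dist_comm _ _
      _ ≤ 3 * n * D' := hhd
      _ = 3 * n * D + ε := by
        rw [hD'def]
        have hne : (3 * (n : ℝ)) ≠ 0 := ne_of_gt h3n
        field_simp
  have hinf : infDist y S ≤ 3 * n * D := by
    by_contra hcon
    push_neg at hcon
    have hε : 0 < (infDist y S - 3 * n * D) / 2 := by linarith
    have := hkey _ hε
    linarith
  obtain ⟨z, hzS, hz⟩ := hScl.exists_infDist_eq_dist hSne y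
  obtain ⟨⟨h, hhH⟩, rfl⟩ := hzS
  refine ⟨h, hhH, ?_⟩
  rw [dist_comm, ← hz]
  exact hinf
end

section
/- Let G be a connected nilpotent Lie group and K ≤ G a compact subgroup. Then K is contained in the center of G. -/
open Manifold Set
open scoped commutatorElement

set_option maxHeartbeats 1000000


namespace NilpAux

variable {G : Type*} [Group G]

/-- Right-nested commutator: `R [g₁,...,gₙ] x = ⁅g₁, ⁅g₂, ... ⁅gₙ, x⁆⁆⁆`. -/
def R (l : List G) (x : G) : G := l.foldr (fun g w => ⁅g, w⁆) x

@[simp] lemma R_nil (x : G) : R ([] : List G) x = x := rfl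
@[simp] lemma R_cons (g : G) (l : List G) (x : G) : R (g :: l) x = ⁅g, R l x⁆ := rfl

lemma R_one : ∀ l : List G, R l (1 : G) = 1
  | [] => rfl
  | g :: l => by simp [R_one l]

/-- Normal closure of values of `R` of length at least `n` with innermost entry in `K`. -/
def N (K : Subgroup G) (n : ℕ) : Subgroup G :=
  Subgroup.normalClosure {z | ∃ l x, n ≤ List.length l ∧ x ∈ K ∧ z = R l x}

instance (K : Subgroup G) (n : ℕ) : (N K n).Normal := Subgroup.normalClosure_normal

lemma R_mem_N {K : Subgroup G} {n : ℕ} {l : List G} {x : G} (hl : n ≤ l.length) (hx : x ∈ K) :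
    R l x ∈ N K n :=
  Subgroup.subset_normalClosure ⟨l, x, hl, hx, rfl⟩

/-- The set of `v` whose commutators with everything land in `N K (n+1)`, as a subgroup. -/
private def C (K : Subgroup G) (n : ℕ) : Subgroup G where
  carrier := {v | ∀ g : G, ⁅g, v⁆ ∈ N K (n + 1)}
  one_mem' := by intro g; simp only [commutatorElement_one_right]; exact one_mem _
  mul_mem' := by
    intro a b ha hb g
    have h : ⁅g, a * b⁆ = ⁅g, a⁆ * (a * ⁅g, b⁆ * a⁻¹) := by
      simp only [commutatorElement_def]; group
    rw [h]
    exact mul_mem (ha g) (Subgroup.Normal.conj_mem inferInstance _ (hb g) a)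
  inv_mem' := by
    intro a ha g
    have h : ⁅g, a⁻¹⁆ = a⁻¹ * ⁅g, a⁆⁻¹ * a := by
      simp only [commutatorElement_def]; group
    rw [h]
    have := inv_mem (ha g)
    have := Subgroup.Normal.conj_mem (inferInstance : (N K (n+1)).Normal) _ this a⁻¹
    simpa using this

private lemma C_normal (K : Subgroup G) (n : ℕ) : (C K n).Normal := by
  constructor
  intro a ha h g
  have hid : ⁅g, h * a * h⁻¹⁆ = h * ⁅h⁻¹ * g * h, a⁆ * h⁻¹ := by
    simp only [commutatorElement_def]; group
  rw [hid]
  exact Subgroup.Normal.conj_mem inferInstance _ (ha _) h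

lemma comm_mem' {K : Subgroup G} {n : ℕ} {v : G} (hv : v ∈ N K n) (g : G) :
    ⁅g, v⁆ ∈ N K (n + 1) := by
  have : N K n ≤ C K n := by
    haveI := C_normal K n
    apply Subgroup.normalClosure_le_normal
    rintro z ⟨l, x, hl, hx, rfl⟩
    intro g'
    have : ⁅g', R l x⁆ = R (g' :: l) x := rfl
    rw [this]
    exact R_mem_N (by simpa using Nat.succ_le_succ hl) hx
  exact this hv g

lemma comm_mem'' {K : Subgroup G} {n : ℕ} {v : G} (hv : v ∈ N K n) (g : G) :
    ⁅v, g⁆ ∈ N K (n + 1) := by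
  have h : ⁅v, g⁆ = ⁅g, v⁆⁻¹ := by simp only [commutatorElement_def]; group
  rw [h]; exact inv_mem (comm_mem' hv g)

/-- Key multiplicativity-modulo-higher-terms lemma. -/
lemma R_mul {K : Subgroup G} {x y : G} (hx : x ∈ K) (hy : y ∈ K) :
    ∀ l : List G, ∃ v ∈ N K (l.length + 1), R l (x * y) = R l x * R l y * v := by
  intro l
  induction l with
  | nil => exact ⟨1, one_mem _, by simp⟩
  | cons g l ih =>
    obtain ⟨v, hv, hEq⟩ := ih
    set A := R l x with hA
    set B := R l y with hB
    refine ⟨⁅A, ⁅g, B⁆⁻¹⁆⁻¹ * ((A * B) * ⁅g, v⁆ * (A * B)⁻¹), ?_, ?_⟩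
    · have h1 : ⁅g, B⁆ ∈ N K (l.length + 1) := by
        have : ⁅g, B⁆ = R (g :: l) y := rfl
        rw [this]; exact R_mem_N (by simp) hy
      have h2 : ⁅A, ⁅g, B⁆⁻¹⁆⁻¹ ∈ N K (l.length + 1 + 1) :=
        inv_mem (comm_mem' (inv_mem h1) A)
      have h3 : (A * B) * ⁅g, v⁆ * (A * B)⁻¹ ∈ N K (l.length + 1 + 1) :=
        Subgroup.Normal.conj_mem inferInstance _ (comm_mem' hv g) (A * B)
      simpa using mul_mem h2 h3
    · rw [R_cons, R_cons, R_cons, hEq, ← hA, ← hB]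
      simp only [commutatorElement_def]
      group

/-- If all weight-(n+1) values vanish then `N K (n+1) = ⊥`. -/
lemma N_eq_bot {K : Subgroup G} {n : ℕ}
    (hT : ∀ l : List G, ∀ x, l.length = n + 1 → x ∈ K → R l x = 1) :
    N K (n + 1) = ⊥ := by
  have key : ∀ l : List G, ∀ x : G, n + 1 ≤ l.length → x ∈ K → R l x = 1 := by
    intro l
    induction l with
    | nil => intro x h hx; exact absurd h (by simp)
    | cons g l ih =>
      intro x h hx
      rcases Nat.lt_or_ge l.length (n+1) with hlt | hge
      · have : (g :: l).length = n + 1 := by simp at h ⊢; omega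
        exact hT _ _ this hx
      · rw [R_cons, ih x hge hx]; simp
  rw [eq_bot_iff]
  apply Subgroup.normalClosure_le_normal
  rintro z ⟨l, x, hl, hx, rfl⟩
  simp [key l x hl hx]

/-- The homomorphism property at the top level. -/
lemma R_hom {K : Subgroup G} {n : ℕ}
    (hT : ∀ l : List G, ∀ x, l.length = n + 2 → x ∈ K → R l x = 1)
    (g : G) (l' : List G) (hl' : l'.length = n) {x y : G} (hx : x ∈ K) (hy : y ∈ K) :
    R (g :: l') (x * y) = R (g :: l') x * R (g :: l') y := by
  obtain ⟨v, hv, hEq⟩ := R_mul hx hy l'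
  have hbot : N K (n + 2) = ⊥ := N_eq_bot (n := n + 1) hT
  have hgv : ⁅g, v⁆ = 1 := by
    have := comm_mem' hv g
    rw [hl'] at this
    rw [hbot] at this
    simpa using this
  set A := R l' x
  set B := R l' y
  have hcent : ∀ h : G, ⁅h, ⁅g, B⁆⁆ = 1 := by
    intro h
    have : ⁅h, ⁅g, B⁆⁆ = R (h :: g :: l') y := rfl
    rw [this]
    exact hT _ _ (by simp [hl']) hy
  have hcomm : A * ⁅g, B⁆ * A⁻¹ = ⁅g, B⁆ := by
    have h2 : A * ⁅g, B⁆ = ⁅g, B⁆ * A :=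
      commutatorElement_eq_one_iff_mul_comm.mp (hcent A)
    rw [h2]; group
  rw [R_cons, hEq]
  calc ⁅g, A * B * v⁆ = ⁅g, A⁆ * (A * (⁅g, B⁆ * (B * ⁅g, v⁆ * B⁻¹)) * A⁻¹) := by
        simp only [commutatorElement_def]; group
    _ = ⁅g, A⁆ * (A * ⁅g, B⁆ * A⁻¹) := by rw [hgv]; group
    _ = ⁅g, A⁆ * ⁅g, B⁆ := by rw [hcomm]
    _ = R (g :: l') x * R (g :: l') y := rfl

end NilpAux


/-- A (finite- or infinite-dimensional) Lie group has no small subgroups, in the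
following concrete form: there is a neighborhood `U` of `1` such that any element all of
whose iterated squares stay in `U` must be trivial. -/
theorem lie_group_no_small_subgroups
    {E : Type*} [NormedAddCommGroup E] [NormedSpace ℝ E]
    (G : Type*) [TopologicalSpace G] [ChartedSpace E G] [Group G]
    [LieGroup 𝓘(ℝ, E) (⊤ : ℕ∞) G] :
    ∃ U : Set G, IsOpen U ∧ (1 : G) ∈ U ∧
      ∀ h : G, (∀ k : ℕ, h ^ (2 ^ k) ∈ U) → h = 1 := by
  set I : ModelWithCorners ℝ E E := 𝓘(ℝ, E)
  set e : PartialEquiv G E := extChartAt I (1 : G) with he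
  set c : E := e 1 with hc
  have h1s : (1 : G) ∈ e.source := mem_extChartAt_source (I := I) 1
  have hts : IsOpen e.target := isOpen_extChartAt_target (I := I) 1
  have hct : c ∈ e.target := e.map_source h1s
  have hsymm1 : e.symm c = 1 := extChartAt_to_inv (I := I) 1
  -- the multiplication read in the chart
  set m : E × E → E := fun q => e (e.symm q.1 * e.symm q.2) with hm
  -- `m` is C^∞ at (c, c)
  have hmul : ContMDiffAt (I.prod I) I ((⊤ : ℕ∞) : WithTop ℕ∞) (fun p : G × G => p.1 * p.2) (1, 1) :=
    (contMDiff_mul I (⊤ : ℕ∞) (G := G)).contMDiffAt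
  have hF : ContDiffAt ℝ 1 m (c, c) := by
    rw [contMDiffAt_iff] at hmul
    obtain ⟨-, hcd⟩ := hmul
    rw [ModelWithCorners.range_eq_univ, contDiffWithinAt_univ] at hcd
    have hpt : (extChartAt (I.prod I) ((1 : G), (1 : G))) (1, 1) = (c, c) := by
      rw [extChartAt_prod]; rfl
    rw [hpt] at hcd
    have : (extChartAt I ((1:G) * (1:G)) ∘ (fun p : G × G => p.1 * p.2) ∘
        (extChartAt (I.prod I) ((1 : G), (1 : G))).symm) = fun q : E × E =>
        e (e.symm q.1 * e.symm q.2) := by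
      funext q
      simp only [Function.comp, extChartAt_prod, PartialEquiv.prod_symm,
        PartialEquiv.prod_coe, PartialEquiv.prod_coe_symm, mul_one]
      rfl
    rw [this] at hcd
    exact hcd.of_le (by exact_mod_cast le_top)
  -- partial "derivative = identity" facts
  have hdiff : DifferentiableAt ℝ m (c, c) := hF.differentiableAt one_ne_zero
  set L : E × E →L[ℝ] E := fderiv ℝ m (c, c) with hL
  have hLd : HasFDerivAt m L (c, c) := hdiff.hasFDerivAt
  have idE := ContinuousLinearMap.id ℝ E
  -- m (u, c) = u near c
  have hid1 : ∀ᶠ u in nhds c, m (u, c) = u := by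
    filter_upwards [hts.mem_nhds hct] with u hu
    simp only [hm, hsymm1, mul_one]
    exact e.right_inv hu
  have hid2 : ∀ᶠ u in nhds c, m (c, u) = u := by
    filter_upwards [hts.mem_nhds hct] with u hu
    simp only [hm, hsymm1, one_mul]
    exact e.right_inv hu
  have hL1 : ∀ w : E, L (w, 0) = w := by
    have hcomp : HasFDerivAt (fun u : E => m (u, c))
        (L.comp ((ContinuousLinearMap.id ℝ E).prod 0)) c := by
      have hpair : HasFDerivAt (fun u : E => ((u, c) : E × E))
          ((ContinuousLinearMap.id ℝ E).prod 0) c := by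
        exact HasFDerivAt.prodMk (hasFDerivAt_id c) (hasFDerivAt_const c c)
      have h := HasFDerivAt.comp (f := fun u : E => ((u, c) : E × E)) c hLd hpair
      simpa [Function.comp_def] using h
    have hid : HasFDerivAt (fun u : E => m (u, c)) (ContinuousLinearMap.id ℝ E) c :=
      (hasFDerivAt_id c).congr_of_eventuallyEq (by filter_upwards [hid1] with u hu; simp [hu])
    have := hcomp.unique hid
    intro w
    have := congrArg (fun (T : E →L[ℝ] E) => T w) this
    simpa using this
  have hL2 : ∀ w : E, L (0, w) = w := by
    have hcomp : HasFDerivAt (fun u : E => m (c, u))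
        (L.comp ((0 : E →L[ℝ] E).prod (ContinuousLinearMap.id ℝ E))) c := by
      have hpair : HasFDerivAt (fun u : E => ((c, u) : E × E))
          (((0 : E →L[ℝ] E)).prod (ContinuousLinearMap.id ℝ E)) c := by
        exact HasFDerivAt.prodMk (hasFDerivAt_const c c) (hasFDerivAt_id c)
      have h := HasFDerivAt.comp (f := fun u : E => ((c, u) : E × E)) c hLd hpair
      simpa [Function.comp_def] using h
    have hid : HasFDerivAt (fun u : E => m (c, u)) (ContinuousLinearMap.id ℝ E) c :=
      (hasFDerivAt_id c).congr_of_eventuallyEq (by filter_upwards [hid2] with u hu; simp [hu])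
    have := hcomp.unique hid
    intro w
    have := congrArg (fun (T : E →L[ℝ] E) => T w) this
    simpa using this
  -- squaring in the chart
  set sq : E → E := fun u => m (u, u) with hsq
  have hsqCD : ContDiffAt ℝ 1 sq c := by
    have hpair : ContDiffAt ℝ 1 (fun u : E => ((u, u) : E × E)) c :=
      ContDiffAt.prodMk contDiffAt_id contDiffAt_id
    have h := ContDiffAt.comp (f := fun u : E => ((u, u) : E × E)) (g := m) c hF hpair
    simpa [Function.comp_def] using h
  set D : E →L[ℝ] E := L.comp ((ContinuousLinearMap.id ℝ E).prod (ContinuousLinearMap.id ℝ E))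
    with hD
  have hDval : ∀ w : E, D w = w + w := by
    intro w
    have : ((w, w) : E × E) = (w, 0) + (0, w) := by simp
    simp only [hD, ContinuousLinearMap.coe_comp', Function.comp,
      ContinuousLinearMap.prod_apply, ContinuousLinearMap.coe_id', id_eq]
    rw [this, map_add, hL1, hL2]
  have hsqD : HasFDerivAt sq D c := by
    have hpair : HasFDerivAt (fun u : E => ((u, u) : E × E))
        ((ContinuousLinearMap.id ℝ E).prod (ContinuousLinearMap.id ℝ E)) c :=
      HasFDerivAt.prodMk (hasFDerivAt_id c) (hasFDerivAt_id c)
    have h := HasFDerivAt.comp (f := fun u : E => ((u, u) : E × E)) c hLd hpair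
    simpa [Function.comp_def] using h
  have hstrict : HasStrictFDerivAt sq D c := by
    have h := hsqCD.hasStrictFDerivAt one_ne_zero
    rwa [hsqD.fderiv] at h
  -- quantitative doubling estimate
  have hsqc : sq c = c := by
    simp only [hsq, hm, hsymm1, mul_one]
    rfl
  obtain ⟨δ, hδpos, hδ⟩ : ∃ δ > 0, ∀ u : E, dist u c < δ →
      (3/2 : ℝ) * ‖u - c‖ ≤ ‖sq u - c‖ := by
    have hlo := hstrict.isLittleO
    have hev := hlo.def (by norm_num : (0:ℝ) < 1/2)
    rw [Metric.eventually_nhds_iff] at hev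
    obtain ⟨δ, hδpos, hδ⟩ := hev
    refine ⟨δ, hδpos, fun u hu => ?_⟩
    have hp : dist ((u, c) : E × E) (c, c) < δ := by
      rw [Prod.dist_eq, dist_self, max_eq_left dist_nonneg]; exact hu
    have := hδ hp
    simp only [hsqc] at this
    have hDu : D (u - c) = (u - c) + (u - c) := hDval _
    have h1 : ‖sq u - c - ((u - c) + (u - c))‖ ≤ 1/2 * ‖u - c‖ := by
      rw [← hDu]; simpa using this
    have h2 : ‖(u - c) + (u - c)‖ - ‖sq u - c‖ ≤ 1/2 * ‖u - c‖ :=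
      le_trans (by
        have := norm_sub_norm_le ((u - c) + (u - c)) (sq u - c)
        calc ‖(u-c)+(u-c)‖ - ‖sq u - c‖ ≤ ‖((u-c)+(u-c)) - (sq u - c)‖ := this
          _ = ‖sq u - c - ((u-c)+(u-c))‖ := by rw [norm_sub_rev]) h1
    have h3 : ‖(u - c) + (u - c)‖ = 2 * ‖u - c‖ := by
      rw [← two_smul ℝ (u - c), norm_smul]; simp
    nlinarith [norm_nonneg (u - c), norm_nonneg (sq u - c)]
  -- the desired neighborhood
  refine ⟨e.source ∩ e ⁻¹' Metric.ball c δ,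
    (continuousOn_extChartAt (I := I) 1).isOpen_inter_preimage
      (isOpen_extChartAt_source (I := I) 1) Metric.isOpen_ball,
    ⟨h1s, by rw [Set.mem_preimage, ← hc]; exact Metric.mem_ball_self hδpos⟩, ?_⟩
  intro h hpow
  -- iterated squares blow up unless e h = c
  set u : ℕ → E := fun k => e (h ^ (2 ^ k)) with hu
  have hmem : ∀ k : ℕ, h ^ (2 ^ k) ∈ e.source ∧ dist (u k) c < δ := by
    intro k
    obtain ⟨hs, hb⟩ := hpow k
    exact ⟨hs, by simpa [hu] using hb⟩
  have hstep : ∀ k : ℕ, u (k + 1) = sq (u k) := by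
    intro k
    have hsrc := (hmem k).1
    have : sq (u k) = e (h ^ (2 ^ k) * h ^ (2 ^ k)) := by
      simp only [hsq, hm, hu]
      rw [e.left_inv hsrc]
    rw [this, ← pow_add]
    have : 2 ^ k + 2 ^ k = 2 ^ (k + 1) := by ring
    rw [this]
  have hgrow : ∀ k : ℕ, (3/2 : ℝ) ^ k * ‖u 0 - c‖ ≤ ‖u k - c‖ := by
    intro k
    induction k with
    | zero => simp
    | succ k ih =>
      have hdk := (hmem k).2
      have := hδ (u k) hdk
      rw [← hstep k] at this
      calc (3/2 : ℝ) ^ (k+1) * ‖u 0 - c‖ = (3/2) * ((3/2) ^ k * ‖u 0 - c‖) := by ring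
        _ ≤ (3/2) * ‖u k - c‖ := by
            have : (0:ℝ) ≤ 3/2 := by norm_num
            nlinarith [ih]
        _ ≤ ‖u (k+1) - c‖ := this
  have hzero : ‖u 0 - c‖ = 0 := by
    by_contra hne
    have hpos : 0 < ‖u 0 - c‖ := lt_of_le_of_ne (norm_nonneg _) (Ne.symm hne)
    obtain ⟨k, hk⟩ := pow_unbounded_of_one_lt (δ / ‖u 0 - c‖) (by norm_num : (1:ℝ) < 3/2)
    have hlt : δ < (3/2 : ℝ) ^ k * ‖u 0 - c‖ := by
      rw [div_lt_iff₀ hpos] at hk; linarith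
    have := lt_of_lt_of_le hlt (hgrow k)
    have hdk := (hmem k).2
    rw [dist_eq_norm] at hdk
    linarith
  have hu0 : e h = c := by
    have h0 : u 0 = c := sub_eq_zero.mp (norm_eq_zero.mp hzero)
    simpa [hu] using h0
  have hsrc0 : h ∈ e.source := by simpa using (hmem 0).1
  calc h = e.symm (e h) := (e.left_inv hsrc0).symm
    _ = e.symm c := by rw [hu0]
    _ = 1 := hsymm1


/-- A compact subgroup of a connected nilpotent Lie group is central. -/
theorem compact_subgroup_of_connected_nilpotent_lie_group_central
    {E : Type*} [NormedAddCommGroup E] [NormedSpace ℝ E] [FiniteDimensional ℝ E]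
    (G : Type*) [TopologicalSpace G] [ChartedSpace E G] [Group G]
    [LieGroup 𝓘(ℝ, E) (⊤ : ℕ∞) G] [ConnectedSpace G]
    (hnil : Group.IsNilpotent G)
    (K : Subgroup G) (hK : IsCompact (K : Set G)) :
    K ≤ Subgroup.center G := by
  haveI := hnil
  haveI : IsTopologicalGroup G := topologicalGroup_of_lieGroup 𝓘(ℝ, E) (⊤ : ℕ∞)
  intro x hx
  obtain ⟨U, hUo, hU1, hUnss⟩ := lie_group_no_small_subgroups (E := E) G
  -- continuity of the nested commutator in its innermost argument
  have hRcont : ∀ l : List G, Continuous fun y : G => NilpAux.R l y := by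
    intro l; induction l with
    | nil => exact continuous_id
    | cons g l ih =>
      have heq : (fun y : G => NilpAux.R (g :: l) y) = fun y =>
          g * NilpAux.R l y * g⁻¹ * (NilpAux.R l y)⁻¹ := by
        funext y; simp [commutatorElement_def]
      rw [heq]; fun_prop
  -- the T-statements
  set T : ℕ → Prop := fun n =>
    ∀ l : List G, ∀ y, l.length = n → y ∈ K → NilpAux.R l y = 1 with hT
  -- inductive step: T (n+2) → T (n+1)
  have step : ∀ n : ℕ, T (n + 2) → T (n + 1) := by
    intro n hTn l y hlen hy
    cases l with
    | nil => simp at hlen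
    | cons g l' =>
      have hl' : l'.length = n := by simpa using hlen
      set S : Set G := {z | ∃ y ∈ K, z = NilpAux.R l' y} with hS
      set W : Subgroup G := Subgroup.centralizer S with hW
      -- the map (g, y) ↦ ⁅g, R l' y⁆ is continuous
      have hfc : Continuous fun p : G × G => NilpAux.R (p.1 :: l') p.2 := by
        have heq : (fun p : G × G => NilpAux.R (p.1 :: l') p.2) = fun p =>
            p.1 * NilpAux.R l' p.2 * p.1⁻¹ * (NilpAux.R l' p.2)⁻¹ := by
          funext p; simp [commutatorElement_def]
        rw [heq]
        have h2 : Continuous fun p : G × G => NilpAux.R l' p.2 :=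
          (hRcont l').comp continuous_snd
        fun_prop
      have hsub : ({(1 : G)} ×ˢ (K : Set G)) ⊆
          (fun p : G × G => NilpAux.R (p.1 :: l') p.2) ⁻¹' U := by
        rintro ⟨a, b⟩ ⟨ha, hb⟩
        simp only [Set.mem_singleton_iff] at ha
        subst ha
        simp only [Set.mem_preimage, NilpAux.R_cons]
        simpa [commutatorElement_def] using hU1
      obtain ⟨V, V', hVo, hV'o, hV1, hKV', hVV'⟩ :=
        generalized_tube_lemma isCompact_singleton hK (hUo.preimage hfc) hsub
      -- every element of V centralizes all the R l' values
      have hVW : V ⊆ (W : Set G) := by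
        intro g₀ hg₀
        rw [SetLike.mem_coe, Subgroup.mem_centralizer_iff]
        rintro z ⟨y₀, hy₀K, rfl⟩
        have hcomm1 : NilpAux.R (g₀ :: l') y₀ = 1 := by
          apply hUnss
          intro k
          have hhom : NilpAux.R (g₀ :: l') y₀ ^ 2 ^ k
              = NilpAux.R (g₀ :: l') (y₀ ^ 2 ^ k) := by
            induction k with
            | zero => simp
            | succ k ihk =>
              have h2 : (2 : ℕ) ^ (k + 1) = 2 ^ k + 2 ^ k := by ring
              rw [h2, pow_add, pow_add, ihk]
              exact (NilpAux.R_hom (n := n) hTn g₀ l' hl'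
                (pow_mem hy₀K _) (pow_mem hy₀K _)).symm
          rw [hhom]
          have hmem : (g₀, y₀ ^ 2 ^ k) ∈ V ×ˢ V' :=
            ⟨hg₀, hKV' (pow_mem hy₀K _)⟩
          exact hVV' hmem
        have := commutatorElement_eq_one_iff_mul_comm.mp hcomm1
        exact this.symm
      -- W is an open subgroup, hence everything by connectedness
      have hWnhds : (W : Set G) ∈ nhds (1 : G) :=
        Filter.mem_of_superset (hVo.mem_nhds (hV1 rfl)) hVW
      have hWopen : IsOpen (W : Set G) := Subgroup.isOpen_of_mem_nhds W hWnhds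
      have hWuniv : (W : Set G) = Set.univ := by
        have hclopen := (⟨W, hWopen⟩ : OpenSubgroup G).isClopen
        exact hclopen.eq_univ ⟨1, one_mem W⟩
      have hgW : g ∈ W := by
        have : g ∈ (W : Set G) := hWuniv ▸ Set.mem_univ g
        exact this
      have hzS : NilpAux.R l' y ∈ S := ⟨y, hy, rfl⟩
      have := Subgroup.mem_centralizer_iff.mp hgW _ hzS
      rw [NilpAux.R_cons]
      exact commutatorElement_eq_one_iff_mul_comm.mpr this.symm
  -- descend from the nilpotency class
  have desc : ∀ m : ℕ, T (m + 1) → T 1 := by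
    intro m
    induction m with
    | zero => exact fun h => h
    | succ m ih => exact fun h => ih (step m h)
  have hbase : ∀ l : List G, ∀ y : G, NilpAux.R l y ∈ Subgroup.lowerCentralSeries (⊤ : Subgroup G) l.length := by
    intro l y
    induction l with
    | nil => exact Subgroup.mem_top y
    | cons g l ih =>
      rw [List.length_cons, lowerCentralSeries_succ, NilpAux.R_cons]
      have : ⁅g, NilpAux.R l y⁆ = ⁅NilpAux.R l y, g⁆⁻¹ := by
        simp only [commutatorElement_def]; group
      rw [this]
      exact inv_mem (Subgroup.commutator_mem_commutator ih (Subgroup.mem_top g))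
  rcases hcn : Group.nilpotencyClass G with _ | m
  · -- trivial group
    have hbot : Subgroup.lowerCentralSeries (⊤ : Subgroup G) 0 = ⊥ := by
      rw [← hcn]; exact lowerCentralSeries_nilpotencyClass
    have hx1 : x = 1 := by
      have : x ∈ Subgroup.lowerCentralSeries (⊤ : Subgroup G) 0 := Subgroup.mem_top x
      rw [hbot] at this
      simpa using this
    rw [hx1]; exact one_mem _
  · have hTm : T (m + 1) := by
      intro l y hlen hy
      have := hbase l y
      rw [hlen, ← hcn, lowerCentralSeries_nilpotencyClass] at this
      simpa using this
    have hT1 : T 1 := desc m hTm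
    rw [Subgroup.mem_center_iff]
    intro g
    have := hT1 [g] x rfl hx
    rw [NilpAux.R_cons, NilpAux.R_nil] at this
    exact commutatorElement_eq_one_iff_mul_comm.mp this
end

section
/- Let f : Y₁ → Y₂ be a metric submersion between proper geodesic spaces, γ : [0,1] → Y₂ a Lipschitz curve, and q₀ ∈ f⁻¹(γ(0)). Then there is a curve γ̃ : [0,1] → Y₁ with f ∘ γ̃ = γ, γ̃(0) = q₀, and length(γ̃) = length(γ). -/
open Metric Set
open scoped ENNReal NNReal

/-- `f` is a metric submersion if images of closed balls are closed balls. -/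
def IsMetricSubmersion {Y₁ Y₂ : Type*} [MetricSpace Y₁] [MetricSpace Y₂] (f : Y₁ → Y₂) : Prop :=
  ∀ (y : Y₁) (r : ℝ), 0 < r → f '' closedBall y r = closedBall (f y) r

section Aux
variable {Y₁ Y₂ : Type*} [MetricSpace Y₁] [MetricSpace Y₂] {f : Y₁ → Y₂}

lemma IsMetricSubmersion.dist_le (hf : IsMetricSubmersion f) (a b : Y₁) :
    dist (f a) (f b) ≤ dist a b := by
  rcases eq_or_ne a b with rfl | h
  · simp
  · have hr : 0 < dist a b := dist_pos.2 h
    have hb : f b ∈ f '' closedBall a (dist a b) :=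
      mem_image_of_mem f (mem_closedBall.2 (by rw [dist_comm]))
    rw [hf a _ hr] at hb
    simpa [dist_comm] using hb

lemma IsMetricSubmersion.exists_lift (hf : IsMetricSubmersion f) (y : Y₁) (p : Y₂) :
    ∃ y', f y' = p ∧ dist y y' = dist (f y) p := by
  rcases eq_or_ne p (f y) with rfl | h
  · exact ⟨y, rfl, by simp⟩
  · have hr : 0 < dist (f y) p := dist_pos.2 (Ne.symm h)
    have hp : p ∈ closedBall (f y) (dist (f y) p) := mem_closedBall.2 (by rw [dist_comm])
    rw [← hf y _ hr] at hp
    obtain ⟨y', hy'b, hy'⟩ := hp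
    refine ⟨y', hy', le_antisymm (by simpa [dist_comm] using mem_closedBall.1 hy'b) ?_⟩
    calc dist (f y) p = dist (f y) (f y') := by rw [hy']
      _ ≤ dist y y' := hf.dist_le y y'

/-- recursively lifted sequence -/
noncomputable def liftSeq (lift : Y₁ → Y₂ → Y₁) (γ : ℝ → Y₂) (q₀ : Y₁) (T : ℕ → ℝ) : ℕ → Y₁
  | 0 => q₀
  | (k+1) => lift (liftSeq lift γ q₀ T k) (γ (T (k+1)))

end Aux

lemma evar_Icc_add {Y : Type*} [MetricSpace Y] (γ : ℝ → Y) {a b c : ℝ}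
    (hab : a ≤ b) (hbc : b ≤ c) :
    eVariationOn γ (Icc a b) + eVariationOn γ (Icc b c) = eVariationOn γ (Icc a c) := by
  simpa using eVariationOn.Icc_add_Icc γ (s := univ) hab hbc (mem_univ b)

lemma evar_le_lip {Y : Type*} [MetricSpace Y] {γ : ℝ → Y} {K : NNReal}
    (hγ : LipschitzOnWith K γ (Icc (0:ℝ) 1)) {a b : ℝ}
    (ha : a ∈ Icc (0:ℝ) 1) (hb : b ∈ Icc (0:ℝ) 1) (hab : a ≤ b) :
    eVariationOn γ (Icc a b) ≤ K * ENNReal.ofReal (b - a) := by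
  have hsub : Icc a b ⊆ Icc (0:ℝ) 1 := Icc_subset_Icc ha.1 hb.2
  have h1 : eVariationOn (γ ∘ id) (Icc a b) ≤ K * eVariationOn (id : ℝ → ℝ) (Icc a b) :=
    (hγ.mono hsub).comp_eVariationOn_le (mapsTo_id _)
  have h2 : eVariationOn (id : ℝ → ℝ) (Icc a b) ≤ ENNReal.ofReal (b - a) := by
    have := (monotoneOn_id (s := Icc a b)).eVariationOn_le
      (a := a) (b := b) (left_mem_Icc.2 hab) (right_mem_Icc.2 hab)
    simpa using this
  calc eVariationOn γ (Icc a b) = eVariationOn (γ ∘ id) (Icc a b) := rfl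
    _ ≤ K * eVariationOn (id : ℝ → ℝ) (Icc a b) := h1
    _ ≤ K * ENNReal.ofReal (b - a) := mul_le_mul_right h2 _
/-- Lipschitz curves lift through metric submersions, with the same length. -/
theorem metric_submersion_curve_lifting
    (Y₁ Y₂ : Type*) [MetricSpace Y₁] [MetricSpace Y₂]
    [ProperSpace Y₁] [ProperSpace Y₂]
    (hgeo₁ : IsGeodesicSpace Y₁) (hgeo₂ : IsGeodesicSpace Y₂)
    (f : Y₁ → Y₂) (hf : IsMetricSubmersion f)
    (γ : ℝ → Y₂) (K : NNReal) (hγ : LipschitzOnWith K γ (Icc (0:ℝ) 1))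
    (q₀ : Y₁) (hq₀ : f q₀ = γ 0) :
    ∃ γ' : ℝ → Y₁, γ' 0 = q₀ ∧ (∀ t ∈ Icc (0:ℝ) 1, f (γ' t) = γ t) ∧
      eVariationOn γ' (Icc (0:ℝ) 1) = eVariationOn γ (Icc (0:ℝ) 1) := by
  classical
  obtain ⟨lift, hlift₁, hlift₂⟩ : ∃ lift : Y₁ → Y₂ → Y₁, (∀ y p, f (lift y p) = p) ∧
      (∀ y p, dist y (lift y p) = dist (f y) p) := by
    choose lift h1 h2 using hf.exists_lift
    exact ⟨lift, h1, h2⟩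
  have hf1 : LipschitzWith 1 f :=
    LipschitzWith.of_dist_le_mul (fun a b => by simpa using hf.dist_le a b)
  -- the dyadic partition times, capped at 1
  set T : ℕ → ℕ → ℝ := fun n k => min ((k : ℝ) / 2 ^ n) 1 with hTdef
  have hT0 : ∀ n, T n 0 = 0 := fun n => by simp [hTdef]
  have hTmem : ∀ n k, T n k ∈ Icc (0:ℝ) 1 := fun n k =>
    ⟨le_min (by positivity) zero_le_one, min_le_right _ _⟩
  have hTmono : ∀ n, Monotone (T n) := by
    intro n i j hij
    have hij' : (i:ℝ) ≤ (j:ℝ) := by exact_mod_cast hij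
    have : (i:ℝ) / 2 ^ n ≤ (j:ℝ) / 2 ^ n := by gcongr
    exact min_le_min this le_rfl
  -- the discrete lifts
  set Q : ℕ → ℕ → Y₁ := fun n => liftSeq lift γ q₀ (T n) with hQdef
  have hQ0 : ∀ n, Q n 0 = q₀ := fun n => rfl
  have hfQ : ∀ n k, f (Q n k) = γ (T n k) := by
    intro n k
    induction k with
    | zero => rw [hT0]; exact (hQ0 n) ▸ hq₀
    | succ k ih => simp only [hQdef, liftSeq, hlift₁]
  have hdQ : ∀ n k, dist (Q n k) (Q n (k+1)) = dist (γ (T n k)) (γ (T n (k+1))) := by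
    intro n k
    have : Q n (k+1) = lift (Q n k) (γ (T n (k+1))) := rfl
    rw [this, hlift₂, hfQ]
  have hedQ : ∀ n k, edist (Q n k) (Q n (k+1)) = edist (γ (T n k)) (γ (T n (k+1))) := by
    intro n k; rw [edist_dist, edist_dist, hdQ]
  have hdQle : ∀ n k, dist (Q n k) (Q n (k+1)) ≤ K * (T n (k+1) - T n k) := by
    intro n k
    rw [hdQ]
    have h := hγ.dist_le_mul _ (hTmem n k) _ (hTmem n (k+1))
    rwa [Real.dist_eq, abs_sub_comm,
      abs_of_nonneg (sub_nonneg.2 (hTmono n (Nat.le_succ k)))] at h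
  have hQbound : ∀ n k, dist q₀ (Q n k) ≤ K := by
    intro n k
    calc dist q₀ (Q n k) = dist (Q n 0) (Q n k) := by rw [hQ0]
      _ ≤ ∑ i ∈ Finset.range k, dist (Q n i) (Q n (i+1)) := dist_le_range_sum_dist _ k
      _ ≤ ∑ i ∈ Finset.range k, (K : ℝ) * (T n (i+1) - T n i) :=
          Finset.sum_le_sum fun i _ => hdQle n i
      _ = (K : ℝ) * (T n k - T n 0) := by rw [← Finset.mul_sum, Finset.sum_range_sub]
      _ ≤ (K : ℝ) * 1 := by
          rw [hT0, sub_zero]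
          exact mul_le_mul_of_nonneg_left (hTmem n k).2 K.coe_nonneg
      _ = (K : ℝ) := mul_one _
  -- chain estimate against the variation of γ
  have hchain : ∀ n i j, i ≤ j →
      edist (Q n i) (Q n j) ≤ eVariationOn γ (Icc (T n i) (T n j)) := by
    intro n i j hij
    have hmono : Monotone fun k => T n (min (i + k) j) := fun a b hab =>
      hTmono n (min_le_min (Nat.add_le_add_left hab i) le_rfl)
    have hmem : ∀ k, T n (min (i + k) j) ∈ Icc (T n i) (T n j) := fun k =>
      ⟨hTmono n (le_min (Nat.le_add_right i k) hij), hTmono n (min_le_right _ _)⟩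
    have h0 := edist_le_range_sum_edist (fun k => Q n (i + k)) (j - i)
    simp only [Nat.add_zero, Nat.add_sub_cancel' hij, ← Nat.add_assoc] at h0
    calc edist (Q n i) (Q n j)
        ≤ ∑ k ∈ Finset.range (j - i), edist (Q n (i + k)) (Q n (i + k + 1)) := h0
      _ = ∑ k ∈ Finset.range (j - i),
            edist (γ ((fun k => T n (min (i + k) j)) (k + 1)))
              (γ ((fun k => T n (min (i + k) j)) k)) := by
          refine Finset.sum_congr rfl fun k hk => ?_
          have hk' : i + k + 1 ≤ j := by
            have := Finset.mem_range.1 hk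
            omega
          have e1 : min (i + k) j = i + k := min_eq_left (by omega)
          have e2 : min (i + k + 1) j = i + k + 1 := min_eq_left (by omega)
          simp only [← Nat.add_assoc, e1, e2]
          rw [hedQ n (i + k), edist_comm]
      _ ≤ eVariationOn γ (Icc (T n i) (T n j)) := eVariationOn.sum_le (f := γ) hmono hmem
  -- the step curves
  set G : ℕ → ℝ → Y₁ := fun n t => Q n ⌊t * 2 ^ n⌋₊ with hGdef
  -- floor estimates
  have hfloor_le : ∀ (n : ℕ), ∀ t ∈ Icc (0:ℝ) 1, T n ⌊t * 2 ^ n⌋₊ ≤ t := by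
    intro n t ht
    have h2n : (0:ℝ) < 2 ^ n := by positivity
    have h1 : ((⌊t * 2 ^ n⌋₊ : ℝ)) ≤ t * 2 ^ n := Nat.floor_le (mul_nonneg ht.1 (by positivity))
    calc T n ⌊t * 2 ^ n⌋₊ ≤ (⌊t * 2 ^ n⌋₊ : ℝ) / 2 ^ n := min_le_left _ _
      _ ≤ t := by rw [div_le_iff₀ h2n]; exact h1
  have hfloor_ge : ∀ (n : ℕ), ∀ t ∈ Icc (0:ℝ) 1, t - (1/2:ℝ) ^ n ≤ T n ⌊t * 2 ^ n⌋₊ := by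
    intro n t ht
    have h2n : (0:ℝ) < 2 ^ n := by positivity
    have h1 : ((⌊t * 2 ^ n⌋₊ : ℝ)) ≤ t * 2 ^ n := Nat.floor_le (mul_nonneg ht.1 (by positivity))
    have hle : ((⌊t * 2 ^ n⌋₊ : ℝ)) / 2 ^ n ≤ t := by rw [div_le_iff₀ h2n]; exact h1
    have hTn : T n ⌊t * 2 ^ n⌋₊ = (⌊t * 2 ^ n⌋₊ : ℝ) / 2 ^ n :=
      min_eq_left (hle.trans ht.2)
    have h2 : t * 2 ^ n < (⌊t * 2 ^ n⌋₊ : ℝ) + 1 := Nat.lt_floor_add_one _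
    have hhalf : (1/2:ℝ) ^ n = 1 / 2 ^ n := by rw [div_pow, one_pow]
    rw [hTn, hhalf, sub_le_iff_le_add, ← add_div, le_div_iff₀ h2n]
    exact h2.le
  -- the limiting curve
  set U : Ultrafilter ℕ := Ultrafilter.of Filter.atTop with hUdef
  have hUle : (U : Filter ℕ) ≤ Filter.atTop := Ultrafilter.of_le _
  have hex : ∀ t : ℝ, ∃ x, Filter.Tendsto (fun n => G n t) (U : Filter ℕ) (nhds x) := by
    intro t
    have hmem : ∀ n, G n t ∈ closedBall q₀ (K : ℝ) := fun n =>
      mem_closedBall'.2 (hQbound n _)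
    obtain ⟨x, -, hx⟩ := (isCompact_closedBall q₀ (K:ℝ)).ultrafilter_le_nhds'
      (U.map (fun n => G n t)) (Ultrafilter.mem_map.2 (Filter.univ_mem' hmem))
    exact ⟨x, (Ultrafilter.coe_map _ _) ▸ hx⟩
  choose γ' hγ' using hex
  -- property 1 : start point
  have prop1 : γ' 0 = q₀ := by
    have hc : ∀ n, G n 0 = q₀ := fun n => by
      simp only [hGdef, zero_mul, Nat.floor_zero, hQ0]
    exact tendsto_nhds_unique (hγ' 0) (by simpa [hc] using (tendsto_const_nhds :
      Filter.Tendsto (fun _ : ℕ => q₀) (U : Filter ℕ) (nhds q₀)))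
  -- property 2 : lifting
  have prop2 : ∀ t ∈ Icc (0:ℝ) 1, f (γ' t) = γ t := by
    intro t ht
    have h1 : Filter.Tendsto (fun n => f (G n t)) (U : Filter ℕ) (nhds (f (γ' t))) :=
      ((hf1.continuous.tendsto _).comp (hγ' t))
    have hd : ∀ n, dist (f (G n t)) (γ t) ≤ (K : ℝ) * (1/2:ℝ) ^ n := by
      intro n
      have : f (G n t) = γ (T n ⌊t * 2 ^ n⌋₊) := hfQ n _
      rw [this]
      have h := hγ.dist_le_mul (T n ⌊t * 2 ^ n⌋₊) (hTmem n _) t ht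
      refine h.trans (mul_le_mul_of_nonneg_left ?_ K.coe_nonneg)
      rw [Real.dist_eq, abs_sub_comm, abs_of_nonneg (sub_nonneg.2 (hfloor_le n t ht))]
      linarith [hfloor_ge n t ht]
    have h0 : Filter.Tendsto (fun n => dist (f (G n t)) (γ t)) Filter.atTop (nhds 0) :=
      squeeze_zero (fun n => dist_nonneg) hd
        (by simpa using (tendsto_pow_atTop_nhds_zero_of_lt_one (by norm_num)
          (by norm_num : (1/2:ℝ) < 1)).const_mul (K:ℝ))
    have h2 : Filter.Tendsto (fun n => f (G n t)) (U : Filter ℕ) (nhds (γ t)) :=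
      (tendsto_iff_dist_tendsto_zero.2 h0).mono_left hUle
    exact tendsto_nhds_unique h1 h2
  -- key distance estimate for the limit curve
  have hkey : ∀ s ∈ Icc (0:ℝ) 1, ∀ t ∈ Icc (0:ℝ) 1, s ≤ t →
      edist (γ' s) (γ' t) ≤ eVariationOn γ (Icc s t) := by
    intro s hs t ht hst
    refine ENNReal.le_of_forall_pos_le_add (fun ε hε _ => ?_)
    have hGest : ∀ n, edist (G n s) (G n t) ≤
        (K : ℝ≥0∞) * ENNReal.ofReal ((1/2:ℝ) ^ n) + eVariationOn γ (Icc s t) := by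
      intro n
      have hij : ⌊s * 2 ^ n⌋₊ ≤ ⌊t * 2 ^ n⌋₊ :=
        Nat.floor_mono (mul_le_mul_of_nonneg_right hst (by positivity))
      have hTi_le : T n ⌊s * 2 ^ n⌋₊ ≤ s := hfloor_le n s hs
      calc edist (G n s) (G n t)
          ≤ eVariationOn γ (Icc (T n ⌊s * 2 ^ n⌋₊) (T n ⌊t * 2 ^ n⌋₊)) := hchain n _ _ hij
        _ ≤ eVariationOn γ (Icc (T n ⌊s * 2 ^ n⌋₊) t) :=
            eVariationOn.mono γ (Icc_subset_Icc le_rfl (hfloor_le n t ht))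
        _ = eVariationOn γ (Icc (T n ⌊s * 2 ^ n⌋₊) s) + eVariationOn γ (Icc s t) :=
            (evar_Icc_add γ hTi_le hst).symm
        _ ≤ (K : ℝ≥0∞) * ENNReal.ofReal (s - T n ⌊s * 2 ^ n⌋₊) + eVariationOn γ (Icc s t) :=
            add_le_add_left (evar_le_lip hγ (hTmem n _) hs hTi_le) _
        _ ≤ (K : ℝ≥0∞) * ENNReal.ofReal ((1/2:ℝ) ^ n) + eVariationOn γ (Icc s t) :=
            add_le_add_left (mul_le_mul_right
              (ENNReal.ofReal_le_ofReal (by linarith [hfloor_ge n s hs])) _) _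
    have hev : ∀ᶠ n in Filter.atTop,
        (K : ℝ≥0∞) * ENNReal.ofReal ((1/2:ℝ) ^ n) ≤ (ε : ℝ≥0∞) := by
      have htd : Filter.Tendsto (fun n : ℕ => (K : ℝ) * (1/2:ℝ) ^ n) Filter.atTop (nhds 0) := by
        simpa using (tendsto_pow_atTop_nhds_zero_of_lt_one (by norm_num)
          (by norm_num : (1/2:ℝ) < 1)).const_mul (K:ℝ)
      filter_upwards [htd.eventually (gt_mem_nhds (by exact_mod_cast hε : (0:ℝ) < ε))] with n hn
      rw [← ENNReal.ofReal_coe_nnreal, ← ENNReal.ofReal_coe_nnreal (p := ε),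
        ← ENNReal.ofReal_mul K.coe_nonneg]
      exact ENNReal.ofReal_le_ofReal hn.le
    have hfin := le_of_tendsto ((hγ' s).edist (hγ' t))
      ((hev.filter_mono hUle).mono (fun n hn =>
        (hGest n).trans (add_le_add_left hn _)))
    calc edist (γ' s) (γ' t) ≤ (ε : ℝ≥0∞) + eVariationOn γ (Icc s t) := hfin
      _ = eVariationOn γ (Icc s t) + (ε : ℝ≥0∞) := add_comm _ _
  refine ⟨γ', prop1, prop2, le_antisymm ?_ ?_⟩
  · -- eVariationOn γ' ≤ eVariationOn γ
    apply iSup_le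
    rintro ⟨m, u, hu, us⟩
    have step : ∀ m', (∑ k ∈ Finset.range m', edist (γ' (u (k+1))) (γ' (u k))) ≤
        eVariationOn γ (Icc (u 0) (u m')) := by
      intro m'
      induction m' with
      | zero => simp
      | succ m' ih =>
        rw [Finset.sum_range_succ]
        calc _ ≤ eVariationOn γ (Icc (u 0) (u m')) + edist (γ' (u (m'+1))) (γ' (u m')) :=
              add_le_add_left ih _
          _ ≤ eVariationOn γ (Icc (u 0) (u m')) + eVariationOn γ (Icc (u m') (u (m'+1))) := by
              gcongr
              rw [edist_comm]
              exact hkey _ (us m') _ (us (m'+1)) (hu (Nat.le_succ m'))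
          _ = eVariationOn γ (Icc (u 0) (u (m'+1))) :=
              evar_Icc_add γ (hu (Nat.zero_le _)) (hu (Nat.le_succ _))
    exact (step m).trans (eVariationOn.mono γ (Icc_subset_Icc (us 0).1 (us m).2))
  · calc eVariationOn γ (Icc (0:ℝ) 1) = eVariationOn (f ∘ γ') (Icc (0:ℝ) 1) :=
        eVariationOn.eq_of_eqOn (fun x hx => (prop2 x hx).symm)
      _ ≤ 1 * eVariationOn γ' (Icc (0:ℝ) 1) :=
        (hf1.lipschitzOnWith).comp_eVariationOn_le (mapsTo_univ _ _)
      _ = eVariationOn γ' (Icc (0:ℝ) 1) := one_mul _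
end

section
/- Let G, G̃ be connected Lie groups equipped with invariant geodesic metrics, and f : G̃ → G a surjective continuous homomorphism with discrete kernel that is a local isometry. Let δ > 0 be such that the ball B^G(e, δ) contains no non-trivial subgroup of G and every loop in B^G(e, δ) is null-homotopic in G. Then B^{G̃}(e, δ) contains no non-trivial subgroup of G̃ and every loop in B^{G̃}(e, δ) is null-homotopic in G̃. -/
open Metric Manifold

open unitInterval Pointwise


noncomputable def secAux {X Y : Type*} [MetricSpace X] (f : X → Y) (ε : ℝ) (x : X) (y : Y) : X :=
  open scoped Classical in
  if h : ∃ z, dist z x < ε / 2 ∧ f z = y then h.choose else x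

section Aux
variable {X Y : Type*} [MetricSpace X] [MetricSpace Y] {f : X → Y} {ε ρ : ℝ}

lemma uniqAux (hε : 0 < ε)
    (hiso : ∀ x a b, dist a x < ε → dist b x < ε → dist (f a) (f b) = dist a b)
    {α : Type*} [TopologicalSpace α] [PreconnectedSpace α]
    {u v : α → X} (hu : Continuous u) (hv : Continuous v)
    (hfuv : ∀ a, f (u a) = f (v a)) (a₀ : α) (h₀ : u a₀ = v a₀) : ∀ a, u a = v a := by
  have hS : IsClopen {a | u a = v a} := by
    constructor
    · exact isClosed_eq hu hv
    · rw [isOpen_iff_mem_nhds]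
      intro a ha
      have h1 : ∀ᶠ b in nhds a, dist (u b) (u a) < ε :=
        Metric.tendsto_nhds.mp (hu.tendsto a) ε hε
      have h2 : ∀ᶠ b in nhds a, dist (v b) (v a) < ε :=
        Metric.tendsto_nhds.mp (hv.tendsto a) ε hε
      filter_upwards [h1, h2] with b hb1 hb2
      have ha' : u a = v a := ha
      have hb2' : dist (v b) (u a) < ε := by
        have : dist (v b) (u a) = dist (v b) (v a) := by rw [ha']
        rw [this]; exact hb2
      have : dist (u b) (v b) = dist (f (u b)) (f (v b)) :=
        (hiso (u a) (u b) (v b) hb1 hb2').symm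
      have : dist (u b) (v b) = 0 := by rw [this, hfuv b, dist_self]
      exact dist_le_zero.mp this.le
  have := hS.eq_univ ⟨a₀, h₀⟩
  intro a
  have : a ∈ {a | u a = v a} := this ▸ Set.mem_univ a
  exact this


lemma secAux_spec (hε : 0 < ε) (hρ : ρ ≤ ε / 2)
    (hiso : ∀ x a b, dist a x < ε → dist b x < ε → dist (f a) (f b) = dist a b)
    (hsec : ∀ x y, dist y (f x) < ρ → ∃ z, dist z x < ε / 2 ∧ f z = y)
    {x : X} {y : Y} (hy : dist y (f x) < ρ) :
    f (secAux f ε x y) = y ∧ dist (secAux f ε x y) x = dist y (f x) := by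
  classical
  have h : ∃ z, dist z x < ε / 2 ∧ f z = y := hsec x y hy
  rw [secAux]
  rw [dif_pos h]
  obtain ⟨h1, h2⟩ := h.choose_spec
  refine ⟨h2, ?_⟩
  calc dist h.choose x = dist (f h.choose) (f x) :=
        (hiso x h.choose x (by linarith) (by simp [hε])).symm
    _ = dist y (f x) := by rw [h2]

lemma secAux_eq (hε : 0 < ε) (hρ : ρ ≤ ε / 2)
    (hiso : ∀ x a b, dist a x < ε → dist b x < ε → dist (f a) (f b) = dist a b)
    (hsec : ∀ x y, dist y (f x) < ρ → ∃ z, dist z x < ε / 2 ∧ f z = y)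
    {x z : X} {y : Y} (hz : dist z x < ε) (hfz : f z = y) (hy : dist y (f x) < ρ) :
    secAux f ε x y = z := by
  classical
  have h : ∃ z, dist z x < ε / 2 ∧ f z = y := hsec x y hy
  rw [secAux, dif_pos h]
  obtain ⟨h1, h2⟩ := h.choose_spec
  have hd : dist h.choose z = 0 := by
    rw [← hiso x h.choose z (by linarith) hz, h2, hfz, dist_self]
  exact eq_of_dist_eq_zero hd

lemma contSecAux (hε : 0 < ε) (hρ : 0 < ρ) (hρε : ρ ≤ ε / 8)
    (hiso : ∀ x a b, dist a x < ε → dist b x < ε → dist (f a) (f b) = dist a b)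
    (hlip : ∀ a b, dist (f a) (f b) ≤ dist a b)
    (hsec : ∀ x y, dist y (f x) < ρ → ∃ z, dist z x < ε / 2 ∧ f z = y)
    {α : Type*} [TopologicalSpace α]
    {Λ : α → X} {k : α → Y} (hΛ : Continuous Λ) (hk : Continuous k)
    (hd : ∀ a, dist (k a) (f (Λ a)) < ρ / 2) :
    Continuous fun a => secAux f ε (Λ a) (k a) := by
  have hρε2 : ρ ≤ ε / 2 := by linarith
  rw [continuous_iff_continuousAt]
  intro a₀
  rw [ContinuousAt, Metric.tendsto_nhds]
  intro ε' hε'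
  have E1 : ∀ᶠ a in nhds a₀, dist (Λ a) (Λ a₀) < ρ / 8 :=
    Metric.tendsto_nhds.mp (hΛ.tendsto a₀) _ (by linarith)
  have E2 : ∀ᶠ a in nhds a₀, dist (k a) (k a₀) < min ε' (ρ / 8) :=
    Metric.tendsto_nhds.mp (hk.tendsto a₀) _ (lt_min hε' (by linarith))
  filter_upwards [E1, E2] with a h1 h2
  obtain ⟨hw1, hw2⟩ := secAux_spec hε hρε2 hiso hsec (lt_trans (hd a) (by linarith))
  have hka₀ : dist (k a) (f (Λ a₀)) < ρ := by
    calc dist (k a) (f (Λ a₀)) ≤ dist (k a) (f (Λ a)) + dist (f (Λ a)) (f (Λ a₀)) :=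
          dist_triangle _ _ _
      _ ≤ dist (k a) (f (Λ a)) + dist (Λ a) (Λ a₀) := by linarith [hlip (Λ a) (Λ a₀)]
      _ < ρ := by linarith [hd a]
  obtain ⟨hz1, hz2⟩ := secAux_spec hε hρε2 hiso hsec hka₀
  obtain ⟨hw01, hw02⟩ := secAux_spec hε hρε2 hiso hsec (lt_trans (hd a₀) (by linarith))
  set w := secAux f ε (Λ a) (k a) with hw
  set z := secAux f ε (Λ a₀) (k a) with hz
  set w₀ := secAux f ε (Λ a₀) (k a₀) with hw₀
  have hwΛ₀ : dist w (Λ a₀) < ε := by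
    calc dist w (Λ a₀) ≤ dist w (Λ a) + dist (Λ a) (Λ a₀) := dist_triangle _ _ _
      _ < ε := by rw [hw2]; linarith [hd a]
  have hzΛ₀ : dist z (Λ a₀) < ε := by rw [hz2]; linarith
  have hwz : w = z := by
    have : dist w z = 0 := by
      rw [← hiso (Λ a₀) w z hwΛ₀ hzΛ₀, hw1, hz1, dist_self]
    exact eq_of_dist_eq_zero this
  have hw0Λ₀ : dist w₀ (Λ a₀) < ε := by rw [hw02]; linarith [hd a₀]
  have : dist w w₀ = dist (k a) (k a₀) := by
    rw [hwz, ← hz1, ← hw01]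
    exact (hiso (Λ a₀) z w₀ hzΛ₀ hw0Λ₀).symm
  rw [this]
  exact lt_of_lt_of_le h2 (min_le_left _ _)

lemma lift2Aux (hε : 0 < ε) (hρ : 0 < ρ) (hρε : ρ ≤ ε / 8)
    (hiso : ∀ x a b, dist a x < ε → dist b x < ε → dist (f a) (f b) = dist a b)
    (hlip : ∀ a b, dist (f a) (f b) ≤ dist a b)
    (hsec : ∀ x y, dist y (f x) < ρ → ∃ z, dist z x < ε / 2 ∧ f z = y)
    {K : unitInterval × unitInterval → Y} (hK : Continuous K)
    {γ0 : unitInterval → X} (hγ0 : Continuous γ0)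
    (h0 : ∀ t, f (γ0 t) = K (0, t))
    (hr0 : ∀ s, K (s, 0) = K (0, 0)) (hr1 : ∀ s, K (s, 1) = K (0, 1)) :
    ∃ L : unitInterval × unitInterval → X, Continuous L ∧ (∀ q, f (L q) = K q) ∧
      (∀ t, L (0, t) = γ0 t) ∧ (∀ s, L (s, 0) = γ0 0) ∧ (∀ s, L (s, 1) = γ0 1) := by
  have hρε2 : ρ ≤ ε / 2 := by linarith
  have hu := CompactSpace.uniformContinuous_of_continuous hK
  rw [Metric.uniformContinuous_iff] at hu
  obtain ⟨η, hη, hη'⟩ := hu (ρ / 2) (by linarith)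
  obtain ⟨n, hn⟩ := exists_nat_one_div_lt hη
  set m : ℕ := n + 1 with hmdef
  have hm : (0 : ℝ) < (m : ℝ) := by positivity
  have h1m : 1 / (m : ℝ) < η := by
    rw [hmdef]; push_cast; exact hn
  set τ : ℕ → unitInterval → unitInterval := fun i s =>
    ⟨min s.1 ((i : ℝ) / m), ⟨le_min s.2.1 (by positivity), le_trans (min_le_left _ _) s.2.2⟩⟩
    with hτdef
  have main : ∀ i : ℕ, i ≤ m → ∃ L : unitInterval × unitInterval → X, Continuous L ∧
      (∀ q, f (L q) = K (τ i q.1, q.2)) ∧ (∀ t, L (0, t) = γ0 t) ∧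
      (∀ s, L (s, 0) = γ0 0) ∧ (∀ s, L (s, 1) = γ0 1) := by
    intro i
    induction i with
    | zero =>
      intro _
      refine ⟨fun q => γ0 q.2, hγ0.comp continuous_snd, ?_, fun t => rfl, fun s => rfl,
        fun s => rfl⟩
      intro q
      have hτ0 : τ 0 q.1 = 0 := by
        apply Subtype.ext
        simp only [hτdef, Nat.cast_zero, zero_div]
        exact min_eq_right q.1.2.1
      rw [hτ0]
      exact h0 q.2
    | succ i ih =>
      intro hi1
      obtain ⟨L, hLc, hLf, hL0, hLa, hLb⟩ := ih (Nat.le_of_succ_le hi1)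
      set a : ℝ := (i : ℝ) / m with hadef
      set b : ℝ := ((i : ℝ) + 1) / m with hbdef
      have hab : a ≤ b := by
        rw [hadef, hbdef]; gcongr; linarith
      have ha0 : 0 ≤ a := by positivity
      have hb1 : b ≤ 1 := by
        rw [hbdef, div_le_one hm]
        have : ((i : ℝ) + 1) = ((i + 1 : ℕ) : ℝ) := by push_cast; ring
        rw [this]
        exact_mod_cast hi1
      have hba : b - a = 1 / m := by rw [hadef, hbdef]; ring
      set ci : unitInterval := ⟨a, ⟨ha0, le_trans hab hb1⟩⟩ with hcidef
      set sg : unitInterval → unitInterval := fun s =>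
        ⟨max (min s.1 b) a, ⟨le_trans ha0 (le_max_right _ _),
          max_le (le_trans (min_le_right _ _) hb1) (le_trans hab hb1)⟩⟩ with hsgdef
      set Λ : unitInterval × unitInterval → X := fun q => L (ci, q.2) with hΛdef
      set k : unitInterval × unitInterval → Y := fun q => K (sg q.1, q.2) with hkdef
      have hΛc : Continuous Λ := hLc.comp (continuous_const.prodMk continuous_snd)
      have hsgc : Continuous sg :=
        Continuous.subtype_mk ((continuous_subtype_val.min continuous_const).max
          continuous_const) _
      have hkc : Continuous k :=
        hK.comp ((hsgc.comp continuous_fst).prodMk continuous_snd)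
      have hτici : τ i ci = ci := by
        apply Subtype.ext
        simp only [hτdef, hcidef]
        exact min_self a
      have hfΛ : ∀ q : unitInterval × unitInterval, f (Λ q) = K (ci, q.2) := by
        intro q
        rw [hΛdef]
        show f (L (ci, q.2)) = _
        rw [hLf (ci, q.2)]
        show K (τ i ci, q.2) = K (ci, q.2)
        rw [hτici]
      have hd : ∀ q : unitInterval × unitInterval, dist (k q) (f (Λ q)) < ρ / 2 := by
        intro q
        rw [hfΛ q, hkdef]
        show dist (K (sg q.1, q.2)) (K (ci, q.2)) < ρ / 2
        apply hη'
        rw [Prod.dist_eq]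
        have h2 : dist q.2 q.2 = 0 := dist_self _
        have h1 : dist (sg q.1) ci < η := by
          rw [Subtype.dist_eq, Real.dist_eq]
          have hge : a ≤ max (min (q.1 : ℝ) b) a := le_max_right _ _
          have hle : max (min (q.1 : ℝ) b) a ≤ b := max_le (min_le_right _ _) hab
          have : |(sg q.1 : ℝ) - (ci : ℝ)| ≤ 1 / m := by
            rw [hsgdef, hcidef]
            show |max (min (q.1 : ℝ) b) a - a| ≤ 1 / m
            rw [abs_of_nonneg (by linarith)]
            linarith
          exact lt_of_le_of_lt this h1m
        rw [max_lt_iff]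
        exact ⟨h1, by rw [h2]; exact hη⟩
      set W : unitInterval × unitInterval → X := fun q => secAux f ε (Λ q) (k q) with hWdef
      have hWc : Continuous W := contSecAux hε hρ hρε hiso hlip hsec hΛc hkc hd
      have hWspec : ∀ q, f (W q) = k q ∧ dist (W q) (Λ q) = dist (k q) (f (Λ q)) :=
        fun q => secAux_spec hε hρε2 hiso hsec (lt_trans (hd q) (by linarith))
      have hWeq : ∀ q : unitInterval × unitInterval, k q = f (Λ q) → W q = Λ q := by
        intro q hq
        refine secAux_eq hε hρε2 hiso hsec ?_ hq.symm ?_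
        · rw [dist_self]; exact hε
        · rw [hq, dist_self]; exact hρ
      have match_ab : ∀ q : unitInterval × unitInterval, ((q.1 : ℝ) = a) → L q = W q := by
        intro q hq
        have hq1 : q.1 = ci := Subtype.ext hq
        have hsgci : sg q.1 = ci := by
          apply Subtype.ext
          rw [hsgdef, hcidef]
          show max (min (q.1 : ℝ) b) a = a
          rw [hq, min_eq_left hab, max_self]
        have hkq : k q = f (Λ q) := by
          rw [hfΛ q, hkdef]
          show K (sg q.1, q.2) = _
          rw [hsgci]
        rw [hWeq q hkq, hΛdef]
        show L q = L (ci, q.2)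
        rw [← hq1]
      set L' : unitInterval × unitInterval → X :=
        fun q => if (q.1 : ℝ) ≤ a then L q else W q with hL'def
      have hL'c : Continuous L' := by
        apply Continuous.if_le hLc hWc (continuous_subtype_val.comp continuous_fst)
          continuous_const
        intro q hq
        exact match_ab q hq
      refine ⟨L', hL'c, ?_, ?_, ?_, ?_⟩
      · intro q
        by_cases h : (q.1 : ℝ) ≤ a
        · have : L' q = L q := if_pos h
          rw [this, hLf q]
          have he : τ i q.1 = τ (i + 1) q.1 := by
            apply Subtype.ext
            show min (q.1 : ℝ) ((i : ℝ) / m) = min (q.1 : ℝ) (((i + 1 : ℕ) : ℝ) / m)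
            have hc : ((i + 1 : ℕ) : ℝ) / m = b := by rw [hbdef]; push_cast; ring
            have hc' : ((i : ℝ) / m) = a := rfl
            rw [hc, hc', min_eq_left h, min_eq_left (le_trans h hab)]
          rw [he]
        · have : L' q = W q := if_neg h
          rw [this, (hWspec q).1, hkdef]
          show K (sg q.1, q.2) = _
          congr 2
          apply Subtype.ext
          rw [hsgdef]
          show max (min (q.1 : ℝ) b) a = min (q.1 : ℝ) (((i + 1 : ℕ) : ℝ) / m)
          have : ((i + 1 : ℕ) : ℝ) / m = b := by rw [hbdef]; push_cast; ring
          rw [this]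
          apply max_eq_left
          exact le_min (le_of_not_ge h) hab
      · intro t
        have : L' (0, t) = L (0, t) := if_pos (by rw [show (((0 : unitInterval) : ℝ)) = 0 from rfl]; exact ha0)
        rw [this]; exact hL0 t
      · intro s
        by_cases h : ((s : ℝ)) ≤ a
        · have : L' (s, 0) = L (s, 0) := if_pos h
          rw [this]; exact hLa s
        · have h' : L' (s, 0) = W (s, 0) := if_neg h
          rw [h']
          have hΛq : Λ (s, 0) = γ0 0 := hLa ci
          have hkq : k (s, 0) = f (γ0 0) := by
            rw [hkdef]
            show K (sg s, 0) = _
            rw [hr0 (sg s), h0 0]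
          refine secAux_eq hε hρε2 hiso hsec ?_ hkq.symm ?_
          · rw [hΛq, dist_self]; exact hε
          · rw [hkq, hΛq, dist_self]; exact hρ
      · intro s
        by_cases h : ((s : ℝ)) ≤ a
        · have : L' (s, 1) = L (s, 1) := if_pos h
          rw [this]; exact hLb s
        · have h' : L' (s, 1) = W (s, 1) := if_neg h
          rw [h']
          have hΛq : Λ (s, 1) = γ0 1 := hLb ci
          have hkq : k (s, 1) = f (γ0 1) := by
            rw [hkdef]
            show K (sg s, 1) = _
            rw [hr1 (sg s), h0 1]
          refine secAux_eq hε hρε2 hiso hsec ?_ hkq.symm ?_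
          · rw [hΛq, dist_self]; exact hε
          · rw [hkq, hΛq, dist_self]; exact hρ
  obtain ⟨L, hLc, hLf, hL0, hLa, hLb⟩ := main m le_rfl
  refine ⟨L, hLc, ?_, hL0, hLa, hLb⟩
  intro q
  rw [hLf q]
  have : τ m q.1 = q.1 := by
    apply Subtype.ext
    simp only [hτdef]
    rw [div_self (ne_of_gt hm)]
    exact min_eq_left q.1.2.2
  rw [this]
end Aux


/-- If `f : G̃ → G` is a surjective continuous homomorphism of connected Lie groups with
invariant geodesic metrics, with discrete kernel and a local isometry, and if the ball
`B^G(e,δ)` contains no non-trivial subgroup and every loop in it is null-homotopic in `G`,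
then the same two properties hold for the ball `B^{G̃}(e,δ)`. -/
theorem final_cover
    {E : Type*} [NormedAddCommGroup E] [NormedSpace ℝ E] [FiniteDimensional ℝ E]
    (G : Type*) [MetricSpace G] [ChartedSpace E G] [Group G]
    [LieGroup 𝓘(ℝ, E) (⊤ : ℕ∞) G] [ConnectedSpace G]
    (Gt : Type*) [MetricSpace Gt] [ChartedSpace E Gt] [Group Gt]
    [LieGroup 𝓘(ℝ, E) (⊤ : ℕ∞) Gt] [ConnectedSpace Gt]
    (hinvG : ∀ g x y : G, dist (g * x) (g * y) = dist x y)
    (hinvGt : ∀ g x y : Gt, dist (g * x) (g * y) = dist x y)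
    (hgeoG : IsGeodesicSpace G) (hgeoGt : IsGeodesicSpace Gt)
    (f : Gt →* G) (hcont : Continuous f) (hsurj : Function.Surjective f)
    (hdiscrete : DiscreteTopology f.ker)
    (hlocIso : ∀ x : Gt, ∃ ε > 0, ∀ a ∈ ball x ε, ∀ b ∈ ball x ε,
      dist (f a) (f b) = dist a b)
    (δ : ℝ) (hδ : 0 < δ)
    (hnss : ∀ H : Subgroup G, (H : Set G) ⊆ closedBall (1 : G) δ → H = ⊥)
    (hnocontent : ∀ (x : G) (γ : Path x x),
      (∀ t, γ t ∈ closedBall (1 : G) δ) → γ.Homotopic (Path.refl x)) :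
    (∀ H : Subgroup Gt, (H : Set Gt) ⊆ closedBall (1 : Gt) δ → H = ⊥) ∧
      (∀ (x : Gt) (γ : Path x x),
        (∀ t, γ t ∈ closedBall (1 : Gt) δ) → γ.Homotopic (Path.refl x)) := by

  haveI : IsTopologicalGroup G := topologicalGroup_of_lieGroup 𝓘(ℝ, E) (⊤ : ℕ∞)
  haveI : IsTopologicalGroup Gt := topologicalGroup_of_lieGroup 𝓘(ℝ, E) (⊤ : ℕ∞)
  haveI : LocallyCompactSpace G := ChartedSpace.locallyCompactSpace E G
  haveI : LocallyCompactSpace Gt := ChartedSpace.locallyCompactSpace E Gt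
  -- uniform local isometry radius
  obtain ⟨ε, hε, hiso0⟩ := hlocIso 1
  have hiso : ∀ x a b : Gt, dist a x < ε → dist b x < ε → dist (f a) (f b) = dist a b := by
    intro x a b ha hb
    have key : ∀ c : Gt, dist (x⁻¹ * c) 1 = dist c x := by
      intro c
      have := hinvGt x (x⁻¹ * c) 1
      rw [mul_inv_cancel_left, mul_one] at this
      exact this.symm
    have ha' : (x⁻¹ * a) ∈ ball (1 : Gt) ε := by rw [mem_ball, key]; exact ha
    have hb' : (x⁻¹ * b) ∈ ball (1 : Gt) ε := by rw [mem_ball, key]; exact hb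
    have h1 : f a = f x * f (x⁻¹ * a) := by rw [← map_mul, mul_inv_cancel_left]
    have h2 : f b = f x * f (x⁻¹ * b) := by rw [← map_mul, mul_inv_cancel_left]
    rw [h1, h2, hinvG (f x), hiso0 _ ha' _ hb']
    have := hinvGt x (x⁻¹ * a) (x⁻¹ * b)
    rw [mul_inv_cancel_left, mul_inv_cancel_left] at this
    exact this.symm
  -- f is 1-Lipschitz
  have hlip : ∀ a b : Gt, dist (f a) (f b) ≤ dist a b := by
    intro x y
    rcases eq_or_ne x y with rfl | hxy
    · simp
    obtain ⟨γ, hγ0, hγd, hγiso⟩ := hgeoGt x y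
    set d := dist x y with hd
    have hd0 : 0 < d := dist_pos.mpr hxy
    obtain ⟨n, hn⟩ := exists_nat_gt (d / ε)
    have hn0 : 0 < (n : ℝ) := lt_trans (by positivity) hn
    set u := d / n with hu
    have hu0 : 0 < u := by positivity
    have huε : u < ε := by
      rw [hu, div_lt_iff₀ hn0]
      calc d = d / ε * ε := by field_simp
        _ < n * ε := by gcongr
        _ = ε * n := mul_comm _ _
    have hnu : (n : ℝ) * u = d := by rw [hu]; field_simp
    have key : ∀ k : ℕ, k ≤ n → dist (f x) (f (γ (k * u))) ≤ k * u := by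
      intro k
      induction k with
      | zero => intro _; simp [hγ0]
      | succ k ih =>
        intro hk
        have hk' : (k : ℝ) + 1 ≤ n := by exact_mod_cast hk
        have hkn : (k : ℝ) ≤ n := by linarith
        have mem1 : (k : ℝ) * u ∈ Set.Icc 0 d := by
          constructor
          · positivity
          · rw [← hnu]; gcongr
        have mem2 : ((k : ℝ) + 1) * u ∈ Set.Icc 0 d := by
          constructor
          · positivity
          · rw [← hnu]; gcongr
        have hstep : dist (f (γ ((k : ℝ) * u))) (f (γ (((k : ℝ) + 1) * u))) = u := by
          have hdd : dist (γ (((k : ℝ) + 1) * u)) (γ ((k : ℝ) * u)) = u := by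
            rw [hγiso _ mem2 _ mem1]
            rw [show ((k : ℝ) + 1) * u - (k : ℝ) * u = u by ring]
            exact abs_of_pos hu0
          rw [hiso (γ ((k : ℝ) * u)) _ _ (by rw [dist_self]; exact hε) (by rw [hdd]; exact huε)]
          rw [dist_comm]
          exact hdd
        have := ih (Nat.le_of_succ_le hk)
        calc dist (f x) (f (γ ((k + 1 : ℕ) * u)))
            ≤ dist (f x) (f (γ ((k : ℝ) * u))) + dist (f (γ ((k : ℝ) * u))) (f (γ ((k + 1 : ℕ) * u))) :=
              dist_triangle _ _ _
          _ ≤ (k : ℝ) * u + u := by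
              push_cast
              refine add_le_add this (le_of_eq ?_)
              rw [show ((k : ℝ) + 1) = ((k : ℝ) + 1) from rfl]
              exact hstep
          _ = ((k + 1 : ℕ) : ℝ) * u := by push_cast; ring
    have := key n le_rfl
    rw [hnu, hγd] at this
    exact this
  -- sigma-compactness of Gt
  haveI : SigmaCompactSpace Gt := by
    obtain ⟨C, hCc, hC1⟩ := exists_compact_mem_nhds (1 : Gt)
    set K : Set Gt := (C ∪ C⁻¹) ∪ {1} with hKdef
    have hKc : IsCompact K := (hCc.union hCc.inv).union isCompact_singleton
    have hK1 : (1 : Gt) ∈ K := Or.inr rfl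
    have hKinv : K⁻¹ = K := by
      ext g
      simp only [hKdef, Set.mem_inv, Set.mem_union, Set.mem_singleton_iff, inv_eq_one,
        Set.mem_inv, inv_inv]
      tauto
    have hKpow : ∀ j : ℕ, IsCompact (K ^ (j + 1)) := by
      intro j
      induction j with
      | zero => rw [pow_one]; exact hKc
      | succ j ih => rw [pow_succ]; exact ih.mul hKc
    have hKpowinv : ∀ j : ℕ, (K ^ (j + 1))⁻¹ = K ^ (j + 1) := by
      intro j
      induction j with
      | zero => rw [pow_one]; exact hKinv
      | succ j ih =>
        rw [pow_succ, mul_inv_rev, hKinv, ih, ← pow_succ']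
        exact pow_succ K (j + 1)
    have hSopen : IsOpen ((Subgroup.closure K : Subgroup Gt) : Set Gt) := by
      apply Subgroup.isOpen_of_mem_nhds (g := (1 : Gt))
      exact Filter.mem_of_superset hC1 fun c hc => Subgroup.subset_closure (Or.inl (Or.inl hc))
    have hSuniv : ((Subgroup.closure K : Subgroup Gt) : Set Gt) = Set.univ :=
      IsClopen.eq_univ ⟨(Subgroup.closure K).isClosed_of_isOpen hSopen, hSopen⟩
        ⟨1, (Subgroup.closure K).one_mem⟩
    refine ⟨⟨fun j => K ^ (j + 1), hKpow, ?_⟩⟩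
    rw [Set.iUnion_eq_univ_iff]
    intro g
    have hg : g ∈ Subgroup.closure K := by
      rw [← SetLike.mem_coe, hSuniv]; trivial
    refine Subgroup.closure_induction (p := fun g _ => ∃ j, g ∈ K ^ (j + 1)) ?_ ?_ ?_ ?_ hg
    · intro x hx
      exact ⟨0, by rw [pow_one]; exact hx⟩
    · exact ⟨0, by rw [pow_one]; exact hK1⟩
    · rintro x y _ _ ⟨j1, h1⟩ ⟨j2, h2⟩
      refine ⟨j1 + j2 + 1, ?_⟩
      have := Set.mul_mem_mul h1 h2
      rw [← pow_add] at this
      convert this using 2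
      ring
    · rintro x _ ⟨j, hj⟩
      exact ⟨j, by rw [← hKpowinv j]; exact Set.inv_mem_inv.mpr hj⟩
  -- open mapping
  have hopen : IsOpenMap f := f.isOpenMap_of_sigmaCompact hsurj hcont
  -- local surjectivity radius
  have h1U : (1 : G) ∈ f '' ball (1 : Gt) (ε / 2) :=
    ⟨1, mem_ball_self (by positivity), map_one f⟩
  obtain ⟨r₀, hr₀, hballsub⟩ := Metric.isOpen_iff.mp (hopen _ isOpen_ball) 1 h1U
  set ρ := min r₀ (ε / 8) with hρdef
  have hρ : 0 < ρ := lt_min hr₀ (by positivity)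
  have hρε : ρ ≤ ε / 8 := min_le_right _ _
  have hsec : ∀ (x : Gt) (y : G), dist y (f x) < ρ → ∃ z, dist z x < ε / 2 ∧ f z = y := by
    intro x y hy
    have h1 : dist ((f x)⁻¹ * y) 1 < r₀ := by
      have := hinvG (f x)⁻¹ y (f x)
      rw [inv_mul_cancel] at this
      rw [this]
      exact lt_of_lt_of_le hy (min_le_left _ _)
    obtain ⟨w, hw1, hw2⟩ := hballsub (mem_ball.mpr h1)
    refine ⟨x * w, ?_, ?_⟩
    · have := hinvGt x w 1
      rw [mul_one] at this
      rw [this]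
      exact mem_ball.mp hw1
    · rw [map_mul, hw2, mul_inv_cancel_left]
  refine ⟨?_, ?_⟩
  · -- no nontrivial subgroup in the ball
    intro H hH
    rw [Subgroup.eq_bot_iff_forall]
    intro h hh
    have hker : f h = 1 := by
      have hmap : ((H.map f : Subgroup G) : Set G) ⊆ closedBall 1 δ := by
        rw [Subgroup.coe_map]
        rintro y ⟨g, hg, rfl⟩
        rw [mem_closedBall]
        calc dist (f g) 1 = dist (f g) (f 1) := by rw [map_one]
          _ ≤ dist g 1 := hlip g 1
          _ ≤ δ := mem_closedBall.mp (hH hg)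
      have h2 := hnss (H.map f) hmap
      have h3 : f h ∈ H.map f := Subgroup.mem_map.mpr ⟨h, hh, rfl⟩
      rw [h2] at h3
      exact Subgroup.mem_bot.mp h3
    obtain ⟨γ, hγ0, hγd, hγiso⟩ := hgeoGt 1 h
    set d := dist (1 : Gt) h with hddef
    have hd0 : (0 : ℝ) ≤ d := dist_nonneg
    have hdδ : d ≤ δ := by rw [hddef, dist_comm]; exact mem_closedBall.mp (hH hh)
    have hmem : ∀ t : unitInterval, (t : ℝ) * d ∈ Set.Icc (0 : ℝ) d := by
      intro t
      exact ⟨mul_nonneg t.2.1 hd0, mul_le_of_le_one_left hd0 t.2.2⟩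
    have hγcont : Continuous (fun t : unitInterval => γ ((t : ℝ) * d)) := by
      rw [Metric.continuous_iff]
      intro t ε' hε'
      refine ⟨ε' / (d + 1), by positivity, ?_⟩
      intro s hst
      rw [Subtype.dist_eq, Real.dist_eq] at hst
      calc dist (γ ((s : ℝ) * d)) (γ ((t : ℝ) * d)) = |(s : ℝ) * d - (t : ℝ) * d| :=
            hγiso _ (hmem s) _ (hmem t)
        _ = |(s : ℝ) - (t : ℝ)| * d := by rw [← sub_mul, abs_mul, abs_of_nonneg hd0]
        _ ≤ |(s : ℝ) - (t : ℝ)| * (d + 1) := by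
            exact mul_le_mul_of_nonneg_left (by linarith) (abs_nonneg _)
        _ < ε' := by
            rw [← lt_div_iff₀ (by positivity : (0 : ℝ) < d + 1)]
            exact hst
    set γp : Path (1 : Gt) h :=
      { toFun := fun t => γ ((t : ℝ) * d)
        continuous_toFun := hγcont
        source' := by
          show γ (((0 : unitInterval) : ℝ) * d) = 1
          rw [show (((0 : unitInterval)) : ℝ) = 0 from rfl, zero_mul, hγ0]
        target' := by
          show γ (((1 : unitInterval) : ℝ) * d) = h
          rw [show (((1 : unitInterval)) : ℝ) = 1 from rfl, one_mul]
          exact hγd } with hγpdef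
    have hq0 : f (γp 0) = 1 := by rw [γp.source, map_one]
    have hq1 : f (γp 1) = 1 := by rw [γp.target]; exact hker
    set q : Path (1 : G) (1 : G) :=
      { toFun := fun t => f (γp t)
        continuous_toFun := hcont.comp γp.continuous
        source' := hq0
        target' := hq1 } with hqdef
    have hqball : ∀ t, q t ∈ closedBall (1 : G) δ := by
      intro t
      rw [mem_closedBall]
      have hup : dist (γp t) 1 ≤ δ := by
        show dist (γ ((t : ℝ) * d)) 1 ≤ δ
        rw [← hγ0, hγiso _ (hmem t) 0 ⟨le_refl 0, hd0⟩, sub_zero,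
          abs_of_nonneg (mul_nonneg t.2.1 hd0)]
        calc (t : ℝ) * d ≤ d := mul_le_of_le_one_left hd0 t.2.2
          _ ≤ δ := hdδ
      calc dist (q t) 1 = dist (f (γp t)) (f 1) := by rw [map_one]; rfl
        _ ≤ dist (γp t) 1 := hlip _ _
        _ ≤ δ := hup
    obtain ⟨F⟩ := hnocontent 1 q hqball
    have h0' : ∀ t, f (γp t) = F (0, t) := fun t => (F.apply_zero t).symm
    have hr0' : ∀ s : unitInterval, F (s, 0) = F (0, 0) := fun s => by
      rw [F.eq_fst s (Or.inl rfl), F.eq_fst 0 (Or.inl rfl)]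
    have hr1' : ∀ s : unitInterval, F (s, 1) = F (0, 1) := fun s => by
      rw [F.eq_fst s (Or.inr rfl), F.eq_fst 0 (Or.inr rfl)]
    obtain ⟨L, hLc, hLf, hL0, hLa, hLb⟩ :=
      lift2Aux hε hρ hρε hiso hlip hsec (K := fun p => F p) F.continuous
        (γ0 := fun t => γp t) γp.continuous h0' hr0' hr1'
    have huniq : ∀ t : unitInterval, L (1, t) = 1 := by
      refine uniqAux hε hiso (u := fun t => L (1, t)) (v := fun _ => (1 : Gt))
        (hLc.comp (continuous_const.prodMk continuous_id)) continuous_const ?_ 0 ?_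
      · intro t
        show f (L (1, t)) = f 1
        rw [hLf (1, t), map_one]
        have h1 : F (1, t) = (Path.refl (1 : G)) t := F.apply_one t
        rw [h1, Path.refl_apply]
      · show L (1, 0) = 1
        rw [hLa 1]
        exact γp.source
    have hfin : L (1, 1) = h := by rw [hLb 1]; exact γp.target
    rw [huniq 1] at hfin
    exact hfin.symm
  · -- loops are contractible
    intro x γ hball
    have hq0 : f (γ 0) = f x := by rw [γ.source]
    have hq1 : f (γ 1) = f x := by rw [γ.target]
    set q : Path (f x) (f x) :=
      { toFun := fun t => f (γ t)
        continuous_toFun := hcont.comp γ.continuous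
        source' := hq0
        target' := hq1 } with hqdef
    have hqball : ∀ t, q t ∈ closedBall (1 : G) δ := by
      intro t
      rw [mem_closedBall]
      calc dist (q t) 1 = dist (f (γ t)) (f 1) := by rw [map_one]; rfl
        _ ≤ dist (γ t) 1 := hlip _ _
        _ ≤ δ := mem_closedBall.mp (hball t)
    obtain ⟨F⟩ := hnocontent (f x) q hqball
    have h0' : ∀ t, f (γ t) = F (0, t) := fun t => (F.apply_zero t).symm
    have hr0' : ∀ s : unitInterval, F (s, 0) = F (0, 0) := fun s => by
      rw [F.eq_fst s (Or.inl rfl), F.eq_fst 0 (Or.inl rfl)]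
    have hr1' : ∀ s : unitInterval, F (s, 1) = F (0, 1) := fun s => by
      rw [F.eq_fst s (Or.inr rfl), F.eq_fst 0 (Or.inr rfl)]
    obtain ⟨L, hLc, hLf, hL0, hLa, hLb⟩ :=
      lift2Aux hε hρ hρε hiso hlip hsec (K := fun p => F p) F.continuous
        (γ0 := fun t => γ t) γ.continuous h0' hr0' hr1'
    have huniq : ∀ t : unitInterval, L (1, t) = x := by
      refine uniqAux hε hiso (u := fun t => L (1, t)) (v := fun _ => x)
        (hLc.comp (continuous_const.prodMk continuous_id)) continuous_const ?_ 0 ?_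
      · intro t
        show f (L (1, t)) = f x
        rw [hLf (1, t)]
        have h1 : F (1, t) = (Path.refl (f x)) t := F.apply_one t
        rw [h1, Path.refl_apply]
      · show L (1, 0) = x
        rw [hLa 1]
        exact γ.source
    refine ⟨{ toHomotopy :=
                { toContinuousMap := ⟨fun p => L p, hLc⟩
                  map_zero_left := fun t => hL0 t
                  map_one_left := fun t => huniq t }
              prop' := fun s t ht => ?_ }⟩
    rcases ht with h | h
    · subst h
      exact hLa s
    · have ht1 : t = 1 := h
      subst ht1
      exact hLb s
end

section
/- Let Y be a proper, semi-locally-simply-connected geodesic space, y ∈ Y and r > 0. If the inclusion of the closed ball B(y,r) into Y induces a non-trivial map on fundamental groups, then there is a loop based at y of length at most 3r that is non-contractible in Y. -/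
open Metric

/-- `Y` is semi-locally-simply-connected: every point has a neighborhood all of whose
loops are null-homotopic in `Y`. -/
def SemiLocallySimplyConnected (Y : Type*) [TopologicalSpace Y] : Prop :=
  ∀ z : Y, ∃ U ∈ nhds z, ∀ (w : Y) (q : Path w w),
    (∀ t, q t ∈ U) → q.Homotopic (Path.refl w)

/-- The length of a loop, as the total variation of the underlying map. -/
noncomputable def loopLength {Y : Type*} [MetricSpace Y] {y : Y} (p : Path y y) : ENNReal :=
  eVariationOn (fun t : unitInterval => p t) Set.univ

section Auxiliary

open unitInterval CategoryTheory

attribute [local instance] Path.Homotopic.setoid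

variable {Y : Type*}

/-! ### Geodesic paths -/

lemma exists_geodesic_path [MetricSpace Y] (hgeo : IsGeodesicSpace Y) (a b : Y) :
    ∃ p : Path a b, ∀ s t : unitInterval, dist (p s) (p t) = dist a b * |(s:ℝ) - (t:ℝ)| := by
  obtain ⟨γ, h0, h1, hd⟩ := hgeo a b
  have hab : (0:ℝ) ≤ dist a b := dist_nonneg
  have key : ∀ s : unitInterval, dist a b * (s:ℝ) ∈ Set.Icc (0:ℝ) (dist a b) := by
    intro s
    exact ⟨mul_nonneg hab s.2.1, by nlinarith [s.2.1, s.2.2]⟩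
  have hdist : ∀ s t : unitInterval,
      dist (γ (dist a b * s)) (γ (dist a b * t)) = dist a b * |(s:ℝ) - (t:ℝ)| := by
    intro s t
    rw [hd _ (key s) _ (key t), ← mul_sub, abs_mul, abs_of_nonneg hab]
  have hcont : Continuous fun s : unitInterval => γ (dist a b * s) := by
    apply LipschitzWith.continuous (K := ⟨dist a b, hab⟩)
    apply LipschitzWith.of_dist_le_mul
    intro s t
    rw [hdist s t, Subtype.dist_eq, Real.dist_eq]
    exact le_of_eq rfl
  refine ⟨⟨⟨fun s => γ (dist a b * s), hcont⟩, ?_, ?_⟩, hdist⟩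
  · show γ (dist a b * ((0 : unitInterval) : ℝ)) = a
    simp [h0]
  · show γ (dist a b * ((1 : unitInterval) : ℝ)) = b
    simp [h1]

/-! ### Splitting a path into its two halves -/

noncomputable def uHalf : unitInterval := ⟨1/2, by constructor <;> norm_num⟩
noncomputable def u34 : unitInterval := ⟨3/4, by constructor <;> norm_num⟩

noncomputable def hmap1 : unitInterval → unitInterval := fun t => ⟨(t:ℝ)/2, by
  constructor
  · linarith [t.2.1]
  · linarith [t.2.2]⟩

noncomputable def hmap2 : unitInterval → unitInterval := fun t => ⟨((t:ℝ)+1)/2, by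
  constructor
  · linarith [t.2.1]
  · linarith [t.2.2]⟩

lemma hmap1_cont : Continuous hmap1 := by
  apply Continuous.subtype_mk
  exact (continuous_subtype_val.div_const 2)

lemma hmap2_cont : Continuous hmap2 := by
  apply Continuous.subtype_mk
  exact ((continuous_subtype_val.add continuous_const).div_const 2)

noncomputable def firstHalf [TopologicalSpace Y] {a b : Y} (p : Path a b) :
    Path a (p uHalf) where
  toFun := fun t => p (hmap1 t)
  continuous_toFun := p.continuous.comp hmap1_cont
  source' := by
    have : hmap1 0 = 0 := by
      apply Subtype.ext; show (((0:unitInterval):ℝ))/2 = ((0:unitInterval):ℝ); norm_num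
    show p (hmap1 0) = a
    rw [this]; exact p.source
  target' := by
    have : hmap1 1 = uHalf := by
      apply Subtype.ext; show (((1:unitInterval):ℝ))/2 = (1:ℝ)/2; norm_num
    show p (hmap1 1) = p uHalf
    rw [this]

noncomputable def secondHalf [TopologicalSpace Y] {a b : Y} (p : Path a b) :
    Path (p uHalf) b where
  toFun := fun t => p (hmap2 t)
  continuous_toFun := p.continuous.comp hmap2_cont
  source' := by
    have : hmap2 0 = uHalf := by
      apply Subtype.ext; show (((0:unitInterval):ℝ)+1)/2 = (1:ℝ)/2; norm_num
    show p (hmap2 0) = p uHalf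
    rw [this]
  target' := by
    have : hmap2 1 = 1 := by
      apply Subtype.ext; show (((1:unitInterval):ℝ)+1)/2 = ((1:unitInterval):ℝ); norm_num
    show p (hmap2 1) = b
    rw [this]; exact p.target

lemma trans_halves [TopologicalSpace Y] {a b : Y} (p : Path a b) :
    (firstHalf p).trans (secondHalf p) = p := by
  ext t
  rw [Path.trans_apply]
  split_ifs with h
  · show p _ = p t
    congr 1
    apply Subtype.ext
    show (2 * (t:ℝ))/2 = (t:ℝ)
    ring
  · show p _ = p t
    congr 1
    apply Subtype.ext
    show ((2 * (t:ℝ) - 1)+1)/2 = (t:ℝ)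
    ring

/-! ### Variation bounds -/

lemma evar_lip [MetricSpace Y] {C : ℝ} (hC : 0 ≤ C) {a b : unitInterval}
    (f : unitInterval → Y)
    (h : ∀ s ∈ Set.Icc a b, ∀ t ∈ Set.Icc a b, dist (f s) (f t) ≤ C * |(s:ℝ) - (t:ℝ)|) :
    eVariationOn f (Set.univ ∩ Set.Icc a b) ≤ ENNReal.ofReal (C * ((b:ℝ) - (a:ℝ))) := by
  apply iSup_le
  rintro ⟨n, ⟨u, hu, us⟩⟩
  have hmem : ∀ i, u i ∈ Set.Icc a b := fun i => (us i).2
  have hmono : ∀ i, ((u i : ℝ)) ≤ (u (i+1) : ℝ) := fun i => Subtype.coe_le_coe.2 (hu (Nat.le_succ i))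
  have hnn : ∀ i, 0 ≤ C * ((u (i+1) : ℝ) - (u i : ℝ)) :=
    fun i => mul_nonneg hC (sub_nonneg.2 (hmono i))
  calc
    (∑ i ∈ Finset.range n, edist (f (u (i + 1))) (f (u i)))
        ≤ ∑ i ∈ Finset.range n, ENNReal.ofReal (C * ((u (i+1) : ℝ) - (u i : ℝ))) := by
      refine Finset.sum_le_sum fun i _ => ?_
      rw [edist_dist]
      apply ENNReal.ofReal_le_ofReal
      have := h _ (hmem (i+1)) _ (hmem i)
      rwa [abs_of_nonneg (sub_nonneg.2 (hmono i))] at this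
    _ = ENNReal.ofReal (∑ i ∈ Finset.range n, C * ((u (i+1) : ℝ) - (u i : ℝ))) := by
      rw [ENNReal.ofReal_sum_of_nonneg fun i _ => hnn i]
    _ ≤ ENNReal.ofReal (C * ((b:ℝ) - (a:ℝ))) := by
      apply ENNReal.ofReal_le_ofReal
      rw [← Finset.mul_sum, Finset.sum_range_sub fun i => ((u i : ℝ))]
      apply mul_le_mul_of_nonneg_left _ hC
      have h1 : ((u n : ℝ)) ≤ (b : ℝ) := Subtype.coe_le_coe.2 (hmem n).2
      have h2 : ((a : ℝ)) ≤ (u 0 : ℝ) := Subtype.coe_le_coe.2 (hmem 0).1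
      linarith

lemma cone_length_le [MetricSpace Y] {y a b : Y} {r : ℝ}
    (pa : Path y a) (pab : Path a b) (pb : Path y b)
    (ha : ∀ s t : unitInterval, dist (pa s) (pa t) = dist y a * |(s:ℝ) - (t:ℝ)|)
    (hab : ∀ s t : unitInterval, dist (pab s) (pab t) = dist a b * |(s:ℝ) - (t:ℝ)|)
    (hb : ∀ s t : unitInterval, dist (pb s) (pb t) = dist y b * |(s:ℝ) - (t:ℝ)|)
    (h1 : dist y a ≤ r) (h2 : dist a b ≤ r) (h3 : dist y b ≤ r) :
    eVariationOn (fun t : unitInterval => (pa.trans (pab.trans pb.symm)) t) Set.univ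
      ≤ ENNReal.ofReal (3 * r) := by
  have h0r : (0:ℝ) ≤ r := le_trans dist_nonneg h1
  set β := pa.trans (pab.trans pb.symm) with hβ
  have valA : ∀ u : unitInterval, (hu : (u:ℝ) ≤ 1/2) →
      β u = pa ⟨2*u, (mul_pos_mem_iff zero_lt_two).2 ⟨u.2.1, hu⟩⟩ := by
    intro u hu
    rw [hβ, Path.trans_apply, dif_pos hu]
  have valB : ∀ u : unitInterval, (h1' : 1/2 ≤ (u:ℝ)) → (h2' : (u:ℝ) ≤ 3/4) →
      β u = pab ⟨4*u - 2, by constructor <;> [linarith; linarith]⟩ := by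
    intro u h1' h2'
    by_cases hu : (u:ℝ) ≤ 1/2
    · rw [valA u hu]
      have hu' : (u:ℝ) = 1/2 := le_antisymm hu h1'
      simp only [show 2*(u:ℝ) = 1 by rw [hu']; norm_num, show 4*(u:ℝ) - 2 = 0 by rw [hu']; norm_num]
      show pa 1 = pab 0
      rw [Path.target, Path.source]
    · rw [hβ, Path.trans_apply, dif_neg hu, Path.trans_apply, dif_pos (by
        show 2*(u:ℝ) - 1 ≤ 1/2; linarith)]
      congr 1
      apply Subtype.ext
      show 2*(2*(u:ℝ) - 1) = 4*(u:ℝ) - 2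
      ring
  have valC : ∀ u : unitInterval, (h1' : 3/4 ≤ (u:ℝ)) →
      β u = pb ⟨4 - 4*u, by constructor <;> [linarith [u.2.2]; linarith]⟩ := by
    intro u h1'
    have hu : ¬ ((u:ℝ) ≤ 1/2) := by push_neg; linarith
    rw [hβ, Path.trans_apply, dif_neg hu]
    by_cases hw : 2*(u:ℝ) - 1 ≤ 1/2
    · rw [Path.trans_apply, dif_pos hw]
      have hu' : (u:ℝ) = 3/4 := le_antisymm (by linarith) h1'
      simp only [show 2*(2*(u:ℝ)-1) = 1 by rw [hu']; norm_num, show 4 - 4*(u:ℝ) = 1 by rw [hu']; norm_num]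
      show pab 1 = pb 1
      rw [Path.target, Path.target]
    · rw [Path.trans_apply, dif_neg hw]
      show pb (σ _) = _
      congr 1
      apply Subtype.ext
      show 1 - (2*(2*(u:ℝ)-1) - 1) = 4 - 4*(u:ℝ)
      ring
  have split1 := eVariationOn.Icc_add_Icc (fun t : unitInterval => β t) (s := Set.univ)
    (a := 0) (b := uHalf) (c := 1)
    (by rw [← Subtype.coe_le_coe]; norm_num [uHalf]) (by rw [← Subtype.coe_le_coe]; norm_num [uHalf]) trivial
  have split2 := eVariationOn.Icc_add_Icc (fun t : unitInterval => β t) (s := Set.univ)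
    (a := uHalf) (b := u34) (c := 1)
    (by rw [← Subtype.coe_le_coe]; norm_num [uHalf, u34]) (by rw [← Subtype.coe_le_coe]; norm_num [u34]) trivial
  have huniv : (Set.univ : Set unitInterval) ∩ Set.Icc 0 1 = Set.univ := by
    ext t
    simp only [Set.mem_inter_iff, Set.mem_univ, true_and, Set.mem_Icc, iff_true]
    constructor <;> rw [← Subtype.coe_le_coe] <;> [exact t.2.1; exact t.2.2]
  have bA : eVariationOn (fun t : unitInterval => β t) (Set.univ ∩ Set.Icc 0 uHalf)
      ≤ ENNReal.ofReal r := by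
    have := evar_lip (C := 2*r) (by linarith) (fun t : unitInterval => β t) (a := 0) (b := uHalf) ?_
    · convert this using 2
      show r = 2*r*((1:ℝ)/2 - 0)
      ring
    · intro s hs t ht
      show dist (β s) (β t) ≤ 2*r*|(s:ℝ) - (t:ℝ)|
      have hs' : (s:ℝ) ≤ 1/2 := by have := hs.2; rw [← Subtype.coe_le_coe] at this; exact this
      have ht' : (t:ℝ) ≤ 1/2 := by have := ht.2; rw [← Subtype.coe_le_coe] at this; exact this
      rw [valA s hs', valA t ht', ha]
      have : |2*(s:ℝ) - 2*(t:ℝ)| = 2 * |(s:ℝ) - (t:ℝ)| := by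
        rw [show 2*(s:ℝ) - 2*(t:ℝ) = 2*((s:ℝ)-(t:ℝ)) by ring, abs_mul, abs_two]
      show dist y a * |(2*(s:ℝ)) - (2*(t:ℝ))| ≤ 2*r*|(s:ℝ) - (t:ℝ)|
      rw [this]
      nlinarith [abs_nonneg ((s:ℝ) - (t:ℝ)), dist_nonneg (x := y) (y := a)]
  have bB : eVariationOn (fun t : unitInterval => β t) (Set.univ ∩ Set.Icc uHalf u34)
      ≤ ENNReal.ofReal r := by
    have := evar_lip (C := 4*r) (by linarith) (fun t : unitInterval => β t) (a := uHalf) (b := u34) ?_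
    · convert this using 2
      show r = 4*r*((3:ℝ)/4 - 1/2)
      ring
    · intro s hs t ht
      show dist (β s) (β t) ≤ 4*r*|(s:ℝ) - (t:ℝ)|
      have hs1 : 1/2 ≤ (s:ℝ) := by have := hs.1; rw [← Subtype.coe_le_coe] at this; exact this
      have hs2 : (s:ℝ) ≤ 3/4 := by have := hs.2; rw [← Subtype.coe_le_coe] at this; exact this
      have ht1 : 1/2 ≤ (t:ℝ) := by have := ht.1; rw [← Subtype.coe_le_coe] at this; exact this
      have ht2 : (t:ℝ) ≤ 3/4 := by have := ht.2; rw [← Subtype.coe_le_coe] at this; exact this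
      rw [valB s hs1 hs2, valB t ht1 ht2, hab]
      have : |(4*(s:ℝ) - 2) - (4*(t:ℝ) - 2)| = 4 * |(s:ℝ) - (t:ℝ)| := by
        rw [show (4*(s:ℝ) - 2) - (4*(t:ℝ) - 2) = 4*((s:ℝ)-(t:ℝ)) by ring, abs_mul]
        norm_num
      show dist a b * |(4*(s:ℝ) - 2) - (4*(t:ℝ) - 2)| ≤ 4*r*|(s:ℝ) - (t:ℝ)|
      rw [this]
      nlinarith [abs_nonneg ((s:ℝ) - (t:ℝ)), dist_nonneg (x := a) (y := b)]
  have bC : eVariationOn (fun t : unitInterval => β t) (Set.univ ∩ Set.Icc u34 1)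
      ≤ ENNReal.ofReal r := by
    have := evar_lip (C := 4*r) (by linarith) (fun t : unitInterval => β t) (a := u34) (b := 1) ?_
    · convert this using 2
      show r = 4*r*(((1:unitInterval):ℝ) - ((u34:unitInterval):ℝ))
      rw [show ((u34:unitInterval):ℝ) = 3/4 from rfl, show (((1:unitInterval)):ℝ) = 1 from rfl]
      ring
    · intro s hs t ht
      show dist (β s) (β t) ≤ 4*r*|(s:ℝ) - (t:ℝ)|
      have hs1 : 3/4 ≤ (s:ℝ) := by have := hs.1; rw [← Subtype.coe_le_coe] at this; exact this
      have ht1 : 3/4 ≤ (t:ℝ) := by have := ht.1; rw [← Subtype.coe_le_coe] at this; exact this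
      rw [valC s hs1, valC t ht1, hb]
      have : |(4 - 4*(s:ℝ)) - (4 - 4*(t:ℝ))| = 4 * |(s:ℝ) - (t:ℝ)| := by
        rw [show (4 - 4*(s:ℝ)) - (4 - 4*(t:ℝ)) = 4*((t:ℝ)-(s:ℝ)) by ring, abs_mul, abs_sub_comm]
        norm_num
      show dist y b * |(4 - 4*(s:ℝ)) - (4 - 4*(t:ℝ))| ≤ 4*r*|(s:ℝ) - (t:ℝ)|
      rw [this]
      nlinarith [abs_nonneg ((s:ℝ) - (t:ℝ)), dist_nonneg (x := y) (y := b)]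
  calc eVariationOn (fun t : unitInterval => β t) Set.univ
      = eVariationOn (fun t : unitInterval => β t) (Set.univ ∩ Set.Icc 0 uHalf)
        + (eVariationOn (fun t : unitInterval => β t) (Set.univ ∩ Set.Icc uHalf u34)
          + eVariationOn (fun t : unitInterval => β t) (Set.univ ∩ Set.Icc u34 1)) := by
        rw [split2, split1, huniv]
    _ ≤ ENNReal.ofReal r + (ENNReal.ofReal r + ENNReal.ofReal r) :=
        add_le_add bA (add_le_add bB bC)
    _ = ENNReal.ofReal (3 * r) := by
        rw [← ENNReal.ofReal_add h0r h0r, ← ENNReal.ofReal_add h0r (by linarith)]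
        congr 1
        ring

/-! ### The fundamental groupoid -/

noncomputable def toHom [TopologicalSpace Y] {a b : Y} (p : Path a b) :
    FundamentalGroupoid.mk a ⟶ FundamentalGroupoid.mk b := ⟦p⟧

lemma toHom_trans [TopologicalSpace Y] {a b c : Y} (p : Path a b) (q : Path b c) :
    toHom (p.trans q) = toHom p ≫ toHom q :=
  rfl

lemma toHom_symm [TopologicalSpace Y] {a b : Y} (p : Path a b) :
    toHom p.symm = Groupoid.inv (toHom p) := rfl

lemma toHom_refl [TopologicalSpace Y] (a : Y) :
    toHom (Path.refl a) = 𝟙 (FundamentalGroupoid.mk a) := rfl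

lemma homotopic_iff [TopologicalSpace Y] {a b : Y} (p q : Path a b) :
    p.Homotopic q ↔ toHom p = toHom q := by
  unfold toHom
  exact ⟨fun h => Quotient.sound h, fun h => Quotient.exact h⟩

lemma cancel1 [TopologicalSpace Y] {a b : Y} (p gab : Path a b)
    (h : (p.trans gab.symm).Homotopic (Path.refl a)) : toHom p = toHom gab := by
  rw [homotopic_iff, toHom_trans, toHom_symm, toHom_refl] at h
  have := congrArg (· ≫ toHom gab) h
  simpa using this

/-- The class of the path `(g y a)⁻¹ ⬝ (g y b)` in the fundamental groupoid. -/
noncomputable def coneHom [TopologicalSpace Y] (g : ∀ a b : Y, Path a b) (y a b : Y) :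
    FundamentalGroupoid.mk a ⟶ FundamentalGroupoid.mk b :=
  Groupoid.inv (toHom (g y a)) ≫ toHom (g y b)

lemma cancel2 [TopologicalSpace Y] (g : ∀ a b : Y, Path a b) {y a b : Y} (gab : Path a b)
    (h : ((g y a).trans (gab.trans (g y b).symm)).Homotopic (Path.refl y)) :
    toHom gab = coneHom g y a b := by
  rw [homotopic_iff, toHom_trans, toHom_trans, toHom_symm, toHom_refl] at h
  have := congrArg (fun z => Groupoid.inv (toHom (g y a)) ≫ z ≫ toHom (g y b)) h
  unfold coneHom
  simpa using this

lemma coneHom_comp [TopologicalSpace Y] (g : ∀ a b : Y, Path a b) (y a m b : Y) :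
    coneHom g y a m ≫ coneHom g y m b = coneHom g y a b := by
  unfold coneHom
  simp

lemma coneHom_self [TopologicalSpace Y] (g : ∀ a b : Y, Path a b) (y : Y) :
    coneHom g y y y = toHom (Path.refl y) := by
  rw [coneHom, toHom_refl]
  simp

end Auxiliary

/-- If the inclusion `B(y,r) → Y` has non-trivial content, there is a non-contractible
loop based at `y` of length at most `3r`. -/
theorem short_noncontractible_loop
    (Y : Type*) [MetricSpace Y] [ProperSpace Y] (hgeo : IsGeodesicSpace Y)
    (hslsc : SemiLocallySimplyConnected Y)
    (y : Y) (r : ℝ) (hr : 0 < r)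
    (hcontent : ∃ γ : Path y y, (∀ t, γ t ∈ closedBall y r) ∧
      ¬ γ.Homotopic (Path.refl y)) :
    ∃ β : Path y y, loopLength β ≤ ENNReal.ofReal (3 * r) ∧
      ¬ β.Homotopic (Path.refl y) := by
  classical
  obtain ⟨γ, hγball, hγnc⟩ := hcontent
  by_contra hcon
  push_neg at hcon
  refine hγnc ?_
  -- geodesics
  choose g hg using fun a b : Y => exists_geodesic_path hgeo a b
  -- Lebesgue number for the cover by good neighbourhoods
  choose U hUnhds hUgood using hslsc
  have hK : IsCompact (closedBall y r) := isCompact_closedBall y r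
  have hcover : closedBall y r ⊆ ⋃ z : closedBall y r, interior (U z.1) := by
    intro x hx
    exact Set.mem_iUnion.2 ⟨⟨x, hx⟩, mem_interior_iff_mem_nhds.2 (hUnhds x)⟩
  obtain ⟨δ, hδ, hcov⟩ :=
    lebesgue_number_lemma_of_metric hK (fun _ => isOpen_interior) hcover
  set ε := min (δ/2) r with hεdef
  have hε0 : 0 < ε := lt_min (by linarith) hr
  have hεδ : ε < δ := lt_of_le_of_lt (min_le_left _ _) (by linarith)
  have hεr : ε ≤ r := min_le_right _ _
  -- small loops near the ball are null-homotopic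
  have hP : ∀ a : Y, dist y a ≤ r → ∀ q : Path a a,
      (∀ t, dist a (q t) ≤ ε) → q.Homotopic (Path.refl a) := by
    intro a ha q hq
    obtain ⟨z, hz⟩ := hcov a (by rwa [mem_closedBall, dist_comm])
    apply hUgood z.1 a q
    intro t
    apply interior_subset (hz ?_)
    rw [mem_ball, dist_comm]
    exact lt_of_le_of_lt (hq t) hεδ
  -- the key induction
  have key : ∀ n : ℕ, ∀ a b : Y, ∀ p : Path a b, (∀ t, dist y (p t) ≤ r) →
      (∀ s t : unitInterval, |(s:ℝ) - (t:ℝ)| ≤ (1/2:ℝ)^n → dist (p s) (p t) ≤ ε) →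
      toHom p = coneHom g y a b := by
    intro n
    induction n with
    | zero =>
      intro a b p hpr hpε
      have hdiam : ∀ s t : unitInterval, dist (p s) (p t) ≤ ε := by
        intro s t
        apply hpε
        rw [pow_zero]
        exact abs_le.2 ⟨by linarith [s.2.1, t.2.2], by linarith [s.2.2, t.2.1]⟩
      have hya : dist y a ≤ r := by have := hpr 0; rwa [p.source] at this
      have hyb : dist y b ≤ r := by have := hpr 1; rwa [p.target] at this
      have habε : dist a b ≤ ε := by
        have := hdiam 0 1; rwa [p.source, p.target] at this
      have hgen : ∀ v : unitInterval, dist a (g a b v) ≤ ε := by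
        intro v
        have h1 := hg a b 0 v
        rw [(g a b).source] at h1
        rw [h1]
        have hv1 : |((0:unitInterval):ℝ) - (v:ℝ)| ≤ 1 := by
          rw [show ((0:unitInterval):ℝ) = 0 from rfl]
          exact abs_le.2 ⟨by linarith [v.2.2], by linarith [v.2.1]⟩
        nlinarith [dist_nonneg (x := a) (y := b),
          abs_nonneg (((0:unitInterval):ℝ) - (v:ℝ))]
      have hL1 : (p.trans (g a b).symm).Homotopic (Path.refl a) := by
        apply hP a hya
        intro t
        rw [Path.trans_apply]
        split_ifs with h
        · have hmem : 2*(t:ℝ) ∈ unitInterval := (unitInterval.mul_pos_mem_iff zero_lt_two).2 ⟨t.2.1, h⟩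
          have := hdiam 0 ⟨2*(t:ℝ), hmem⟩
          rw [p.source] at this
          exact this
        · show dist a ((g a b) (unitInterval.symm ⟨2*(t:ℝ) - 1, by
            constructor <;> [linarith [(not_le.1 h)]; linarith [t.2.2]]⟩)) ≤ ε
          exact hgen _
      have e1 : toHom p = toHom (g a b) := cancel1 _ _ hL1
      have hL2 : ((g y a).trans ((g a b).trans (g y b).symm)).Homotopic (Path.refl y) := by
        apply hcon
        show eVariationOn _ _ ≤ _
        exact cone_length_le (g y a) (g a b) (g y b) (hg y a) (hg a b) (hg y b)
          hya (le_trans habε hεr) hyb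
      have e2 := cancel2 g _ hL2
      rw [e1, e2]
    | succ n ih =>
      intro a b p hpr hpε
      have hs1 : ∀ s t : unitInterval, |(s:ℝ) - (t:ℝ)| ≤ (1/2:ℝ)^n →
          dist ((firstHalf p) s) ((firstHalf p) t) ≤ ε := by
        intro s t hst
        show dist (p (hmap1 s)) (p (hmap1 t)) ≤ ε
        apply hpε
        show |(s:ℝ)/2 - (t:ℝ)/2| ≤ (1/2:ℝ)^(n+1)
        rw [show (s:ℝ)/2 - (t:ℝ)/2 = ((s:ℝ)-(t:ℝ))/2 by ring, abs_div, abs_two, pow_succ]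
        linarith
      have hs2 : ∀ s t : unitInterval, |(s:ℝ) - (t:ℝ)| ≤ (1/2:ℝ)^n →
          dist ((secondHalf p) s) ((secondHalf p) t) ≤ ε := by
        intro s t hst
        show dist (p (hmap2 s)) (p (hmap2 t)) ≤ ε
        apply hpε
        show |((s:ℝ)+1)/2 - ((t:ℝ)+1)/2| ≤ (1/2:ℝ)^(n+1)
        rw [show ((s:ℝ)+1)/2 - ((t:ℝ)+1)/2 = ((s:ℝ)-(t:ℝ))/2 by ring, abs_div, abs_two, pow_succ]
        linarith
      have ih1 := ih a (p uHalf) (firstHalf p) (fun t => hpr (hmap1 t)) hs1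
      have ih2 := ih (p uHalf) b (secondHalf p) (fun t => hpr (hmap2 t)) hs2
      rw [← trans_halves p, toHom_trans, ih1, ih2]
      exact coneHom_comp g y a (p uHalf) b
  -- uniform continuity of γ gives a suitable scale
  have huc : UniformContinuous (fun t : unitInterval => γ t) :=
    CompactSpace.uniformContinuous_of_continuous γ.continuous
  rw [Metric.uniformContinuous_iff] at huc
  obtain ⟨δ', hδ', hδ'e⟩ := huc ε hε0
  obtain ⟨n, hn⟩ : ∃ n : ℕ, (1/2:ℝ)^n < δ' :=
    exists_pow_lt_of_lt_one hδ' (by norm_num)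
  have hkey := key n y y γ
    (fun t => by rw [dist_comm]; exact mem_closedBall.1 (hγball t)) ?_
  · rw [homotopic_iff, hkey, coneHom_self]
  · intro s t hst
    apply le_of_lt
    apply hδ'e
    rw [Subtype.dist_eq, Real.dist_eq]
    exact lt_of_le_of_lt hst hn
end
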